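/- arXiv:1906.11037 — 7 statements merged into one kernel-verified Lean document; each statement's English description precedes it below -/
import Mathlib

section
/- Let p be a polynomial in n variables given by p(x) = Σ_{|β̂| ≤ l} a_{β̂} x^{β̂} (β̂ ∈ ℕⁿ), and let k ≥ l. Then for all x ∈ ℝⁿ, p(x) = Σ_{|α̂| + α₀ = k} b_{(α̂,α₀)} B^{(k)}_{(α̂,α₀)}(x), where b_{(α̂,α₀)} = Σ_{β̂ ≤ α̂, |β̂| ≤ l} ( (Π_{i=1}^{n} C(α̂ᵢ, β̂ᵢ)) / ( k! / (β̂₁!⋯β̂ₙ!(k−|β̂|)!) ) ) · a_{β̂}. That is, the simplicial Bernstein coefficients of p of degree k on the standard simplex are given by this explicit formula. -/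
open Finset

noncomputable section

/-- The standard simplex Δ in ℝⁿ. -/
def stdSimp (n : ℕ) : Set (Fin n → ℝ) :=
  {x | (∀ i, 0 ≤ x i) ∧ ∑ i, x i ≤ 1}

/-- Multi-indices α ∈ ℕ^{n+1} with |α| = k. -/
def multIdx (n k : ℕ) : Finset (Fin (n+1) → ℕ) :=
  Finset.Nat.antidiagonalTuple (n+1) k

lemma multIdx_nonempty (n k : ℕ) : (multIdx n k).Nonempty :=
  ⟨fun i => if i = 0 then k else 0, by
    simp [multIdx, Finset.Nat.mem_antidiagonalTuple]⟩

/-- Bernstein basis polynomial of degree k on the standard simplex. -/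
def bern (n k : ℕ) (α : Fin (n+1) → ℕ) (x : Fin n → ℝ) : ℝ :=
  ((k.factorial : ℝ) / ∏ i, ((α i).factorial : ℝ)) *
    (∏ i : Fin n, x i ^ α i.succ) * (1 - ∑ i, x i) ^ α 0

/-- i-th standard unit multi-index. -/
def unitIdx (n : ℕ) (i : Fin (n+1)) : Fin (n+1) → ℕ :=
  fun j => if j = i then 1 else 0

/-- vertex multi-index k·eᵢ -/
def vertIdx (n k : ℕ) (i : Fin (n+1)) : Fin (n+1) → ℕ :=
  fun j => if j = i then k else 0

/-- second difference -/
def secondDiff (n : ℕ) (b : (Fin (n+1) → ℕ) → ℝ) (γ : Fin (n+1) → ℕ)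
    (i j : Fin (n+1)) : ℝ :=
  b (γ + unitIdx n i + unitIdx n (j - 1)) + b (γ + unitIdx n (i - 1) + unitIdx n j)
    - b (γ + unitIdx n (i - 1) + unitIdx n (j - 1)) - b (γ + unitIdx n i + unitIdx n j)

/-- Multi-indices β̂ ∈ ℕⁿ with |β̂| ≤ l. -/
def lowIdx (n l : ℕ) : Finset (Fin n → ℕ) :=
  (Finset.range (l+1)).biUnion fun j => Finset.Nat.antidiagonalTuple n j

lemma bern_key (n k : ℕ) (β : Fin n → ℕ) (hβ : ∑ i, β i ≤ k) (x : Fin n → ℝ) :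
    (∏ i, x i ^ β i) =
    ∑ α ∈ (multIdx n k).filter (fun α => ∀ i, β i ≤ α i.succ),
      ((∏ i, ((α i.succ).choose (β i) : ℝ)) /
        ((k.factorial : ℝ) /
          ((∏ i, ((β i).factorial : ℝ)) * ((k - ∑ i, β i).factorial : ℝ))))
        * bern n k α x := by
  classical
  set m := ∑ i, β i with hm
  set β' : Fin (n+1) → ℕ := Fin.cons 0 β with hβ'
  set y : Fin (n+1) → ℝ := Fin.cons (1 - ∑ i, x i) x with hy
  have hsumy : ∑ j, y j = 1 := by
    rw [hy, Fin.sum_univ_succ]; simp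
  have hrhs :
      (∑ α ∈ (multIdx n k).filter (fun α => ∀ i, β i ≤ α i.succ),
        ((∏ i, ((α i.succ).choose (β i) : ℝ)) /
          ((k.factorial : ℝ) /
            ((∏ i, ((β i).factorial : ℝ)) * ((k - m).factorial : ℝ))))
          * bern n k α x)
      = ∑ γ ∈ piAntidiag (univ : Finset (Fin (n+1))) (k - m),
          (∏ i, x i ^ β i) * ((Nat.multinomial univ γ : ℝ) * ∏ j, y j ^ γ j) := by
    refine Finset.sum_nbij' (fun α => α - β') (fun γ => γ + β') ?_ ?_ ?_ ?_ ?_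
    · intro α hα
      simp only [mem_filter, multIdx, Finset.Nat.mem_antidiagonalTuple] at hα
      obtain ⟨hs, hle⟩ := hα
      have hle' : ∀ j, β' j ≤ α j := by
        intro j
        refine Fin.cases ?_ ?_ j
        · simp [hβ']
        · intro i; simpa [hβ'] using hle i
      simp only [mem_piAntidiag, mem_univ, implies_true, and_true]
      have he : univ.sum (α - β') = ∑ j, (α j - β' j) := rfl
      have hadd : (∑ j, (α j - β' j)) + ∑ j, β' j = ∑ j, α j := by
        rw [← Finset.sum_add_distrib]
        refine Finset.sum_congr rfl fun j _ => ?_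
        simp [Nat.sub_add_cancel (hle' j)]
      have hb' : ∑ j, β' j = m := by
        rw [hβ', Fin.sum_univ_succ]; simp [hm]
      omega
    · intro γ hγ
      simp only [mem_piAntidiag, mem_univ, implies_true, and_true] at hγ
      have hb' : ∑ j, β' j = m := by
        rw [hβ', Fin.sum_univ_succ]; simp [hm]
      simp only [mem_filter, multIdx, Finset.Nat.mem_antidiagonalTuple]
      constructor
      · have he : ∑ j, (γ + β') j = (∑ j, γ j) + ∑ j, β' j := by
          simp only [Pi.add_apply]; rw [Finset.sum_add_distrib]
        have he2 : univ.sum γ = ∑ j, γ j := rfl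
        rw [he]; omega
      · intro i; simp [hβ']
    · intro α hα
      simp only [mem_filter, multIdx, Finset.Nat.mem_antidiagonalTuple] at hα
      funext j
      refine Fin.cases ?_ ?_ j
      · simp [hβ']
      · intro i
        simp [hβ', Nat.sub_add_cancel (hα.2 i)]
    · intro γ _
      funext j
      simp
    · intro α hα
      simp only [mem_filter, multIdx, Finset.Nat.mem_antidiagonalTuple] at hα
      obtain ⟨hs, hle⟩ := hα
      set γ : Fin (n+1) → ℕ := α - β' with hγdef
      have hγ0 : γ 0 = α 0 := by simp [hγdef, hβ']
      have hγs : ∀ i : Fin n, γ i.succ = α i.succ - β i := by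
        intro i; simp [hγdef, hβ']
      have hαs : ∀ i : Fin n, α i.succ = γ i.succ + β i := by
        intro i; rw [hγs i, Nat.sub_add_cancel (hle i)]
      have hsumγ : ∑ j, γ j = k - m := by
        have : (∑ j, γ j) + ∑ j, β' j = ∑ j, α j := by
          rw [← Finset.sum_add_distrib]
          refine Finset.sum_congr rfl fun j _ => ?_
          refine Fin.cases ?_ (fun i => ?_) j
          · simp [hγ0, hβ']
          · simp [hγdef, hβ', Nat.sub_add_cancel (hle i)]
        have hb' : ∑ j, β' j = m := by
          rw [hβ', Fin.sum_univ_succ]; simp [hm]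
        omega
      -- coefficient computation
      have hfacβ : (0:ℝ) < ∏ i, ((β i).factorial : ℝ) := by
        apply Finset.prod_pos; intro i _; exact_mod_cast (β i).factorial_pos
      have hfacα : (0:ℝ) < ∏ j, ((α j).factorial : ℝ) := by
        apply Finset.prod_pos; intro j _; exact_mod_cast (α j).factorial_pos
      have hfacγ : (0:ℝ) < ∏ j, ((γ j).factorial : ℝ) := by
        apply Finset.prod_pos; intro j _; exact_mod_cast (γ j).factorial_pos
      have hkfac : (0:ℝ) < (k.factorial : ℝ) := by exact_mod_cast k.factorial_pos
      have hkm : (0:ℝ) < ((k - m).factorial : ℝ) := by exact_mod_cast (k-m).factorial_pos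
      -- multinomial as quotient
      have hmulti : (Nat.multinomial univ γ : ℝ)
          = ((k - m).factorial : ℝ) / ∏ j, ((γ j).factorial : ℝ) := by
        have := Nat.multinomial_spec (univ : Finset (Fin (n+1))) γ
        rw [hsumγ] at this
        have : ((∏ j, (γ j).factorial : ℕ) : ℝ) * (Nat.multinomial univ γ : ℝ)
            = ((k - m).factorial : ℝ) := by exact_mod_cast congrArg Nat.cast this
        push_cast at this
        field_simp
        linarith [this]
      -- choose product identity
      have hchoose : (∏ i : Fin n, ((α i.succ).choose (β i) : ℝ))
            * (∏ i : Fin n, ((β i).factorial : ℝ)) * (∏ i : Fin n, ((γ i.succ).factorial : ℝ))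
          = ∏ i : Fin n, ((α i.succ).factorial : ℝ) := by
        rw [← Finset.prod_mul_distrib, ← Finset.prod_mul_distrib]
        refine Finset.prod_congr rfl fun i _ => ?_
        have h1 := Nat.choose_mul_factorial_mul_factorial (hle i)
        have h2 : α i.succ - β i = γ i.succ := (hγs i).symm
        rw [h2] at h1
        exact_mod_cast congrArg Nat.cast h1
      have hαprod : (∏ j, ((α j).factorial : ℝ))
          = ((α 0).factorial : ℝ) * ∏ i : Fin n, ((α i.succ).factorial : ℝ) := by
        rw [Fin.prod_univ_succ]
      have hγprod : (∏ j, ((γ j).factorial : ℝ))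
          = ((α 0).factorial : ℝ) * ∏ i : Fin n, ((γ i.succ).factorial : ℝ) := by
        rw [Fin.prod_univ_succ, hγ0]
      -- powers
      have hxpow : (∏ i : Fin n, x i ^ α i.succ)
          = (∏ i, x i ^ β i) * ∏ i : Fin n, x i ^ γ i.succ := by
        rw [← Finset.prod_mul_distrib]
        refine Finset.prod_congr rfl fun i _ => ?_
        rw [hαs i, pow_add, mul_comm]
      have hypow : (∏ j, y j ^ γ j)
          = (1 - ∑ i, x i) ^ α 0 * ∏ i : Fin n, x i ^ γ i.succ := by
        rw [Fin.prod_univ_succ, hγ0, hy]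
        simp
      have hA : (0:ℝ) < ∏ i : Fin n, ((α i.succ).choose (β i) : ℝ) := by
        apply Finset.prod_pos; intro i _
        exact_mod_cast Nat.choose_pos (hle i)
      rw [bern, hxpow, hypow, hmulti, hαprod, hγprod, ← hchoose]
      have hfacα0 : (0:ℝ) < ((α 0).factorial : ℝ) := by exact_mod_cast (α 0).factorial_pos
      have hfacγs : (0:ℝ) < ∏ i : Fin n, ((γ i.succ).factorial : ℝ) := by
        apply Finset.prod_pos; intro i _; exact_mod_cast (γ i.succ).factorial_pos
      field_simp
  rw [hrhs, ← Finset.mul_sum, ← Finset.sum_pow_eq_sum_piAntidiag, hsumy, one_pow, mul_one]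

/-- explicit formula for the simplicial Bernstein coefficients of
`p(x) = Σ_{|β̂| ≤ l} a_{β̂} x^{β̂}` of degree `k ≥ l` on the standard simplex. -/
theorem stmt0 (n l k : ℕ) (hn : 1 ≤ n) (hlk : l ≤ k)
    (a : (Fin n → ℕ) → ℝ) :
    ∀ x : Fin n → ℝ,
      (∑ β ∈ lowIdx n l, a β * ∏ i, x i ^ β i) =
      ∑ α ∈ multIdx n k,
        (∑ β ∈ (lowIdx n l).filter (fun β => ∀ i, β i ≤ α i.succ),
            ((∏ i, ((α i.succ).choose (β i) : ℝ)) /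
              ((k.factorial : ℝ) /
                ((∏ i, ((β i).factorial : ℝ)) * ((k - ∑ i, β i).factorial : ℝ)))) * a β)
          * bern n k α x := by
  classical
  intro x
  have hmem : ∀ β ∈ lowIdx n l, ∑ i, β i ≤ k := by
    intro β hb
    simp only [lowIdx, mem_biUnion, mem_range, Finset.Nat.mem_antidiagonalTuple] at hb
    obtain ⟨j, hj, hsum⟩ := hb
    omega
  calc ∑ β ∈ lowIdx n l, a β * ∏ i, x i ^ β i
      = ∑ β ∈ lowIdx n l, ∑ α ∈ (multIdx n k).filter (fun α => ∀ i, β i ≤ α i.succ),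
          ((∏ i, ((α i.succ).choose (β i) : ℝ)) /
              ((k.factorial : ℝ) /
                ((∏ i, ((β i).factorial : ℝ)) * ((k - ∑ i, β i).factorial : ℝ)))) * a β
            * bern n k α x := by
        refine Finset.sum_congr rfl fun β hb => ?_
        rw [bern_key n k β (hmem β hb) x, Finset.mul_sum]
        exact Finset.sum_congr rfl fun α _ => by ring
    _ = ∑ β ∈ lowIdx n l, ∑ α ∈ multIdx n k,
          if (∀ i, β i ≤ α i.succ) then
            ((∏ i, ((α i.succ).choose (β i) : ℝ)) /
              ((k.factorial : ℝ) /
                ((∏ i, ((β i).factorial : ℝ)) * ((k - ∑ i, β i).factorial : ℝ)))) * a β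
            * bern n k α x
          else 0 := by
        exact Finset.sum_congr rfl fun β _ => (Finset.sum_filter _ _)
    _ = ∑ α ∈ multIdx n k, ∑ β ∈ lowIdx n l,
          if (∀ i, β i ≤ α i.succ) then
            ((∏ i, ((α i.succ).choose (β i) : ℝ)) /
              ((k.factorial : ℝ) /
                ((∏ i, ((β i).factorial : ℝ)) * ((k - ∑ i, β i).factorial : ℝ)))) * a β
            * bern n k α x
          else 0 := Finset.sum_comm
    _ = ∑ α ∈ multIdx n k,
        (∑ β ∈ (lowIdx n l).filter (fun β => ∀ i, β i ≤ α i.succ),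
            ((∏ i, ((α i.succ).choose (β i) : ℝ)) /
              ((k.factorial : ℝ) /
                ((∏ i, ((β i).factorial : ℝ)) * ((k - ∑ i, β i).factorial : ℝ)))) * a β)
          * bern n k α x := by
        refine Finset.sum_congr rfl fun α _ => ?_
        rw [← Finset.sum_filter, Finset.sum_mul]
end
end

section
/- (Degree elevation identity.) Let p be a polynomial in n variables with p(x) = Σ_{|α|=k} b_α B^{(k)}_α(x) for all x ∈ ℝⁿ, where α ranges over multi-indices α ∈ ℕ^{n+1} with |α| = k. Define, for each multi-index β ∈ ℕ^{n+1} with |β| = k+1, b′_β = (1/(k+1)) Σ_{i=0}^{n} βᵢ b_{β−êᵢ} (where êᵢ is the i-th standard unit vector of ℕ^{n+1} and terms with βᵢ = 0 are omitted). Then p(x) = Σ_{|β|=k+1} b′_β B^{(k+1)}_β(x) for all x ∈ ℝⁿ; that is, b′ are the Bernstein coefficients of p of degree k+1 on Δ. -/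
open Finset

noncomputable section

lemma prod_fact_add (n : ℕ) (α : Fin (n+1) → ℕ) (i : Fin (n+1)) :
    ∏ j, (((α + unitIdx n i) j).factorial : ℝ)
      = ((α i : ℝ) + 1) * ∏ j, ((α j).factorial : ℝ) := by
  rw [← Finset.mul_prod_erase univ (fun j => (((α + unitIdx n i) j).factorial : ℝ)) (mem_univ i),
      ← Finset.mul_prod_erase univ (fun j => ((α j).factorial : ℝ)) (mem_univ i)]
  have h1 : (α + unitIdx n i) i = α i + 1 := by simp [unitIdx]
  have h2 : ∀ j ∈ univ.erase i, (((α + unitIdx n i) j).factorial : ℝ) = ((α j).factorial : ℝ) := by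
    intro j hj
    have : j ≠ i := (mem_erase.mp hj).1
    simp [unitIdx, this]
  rw [Finset.prod_congr rfl h2, h1]
  push_cast [Nat.factorial_succ]
  ring

lemma bern_elev (n k : ℕ) (α : Fin (n+1) → ℕ) (i : Fin (n+1)) (x : Fin n → ℝ) :
    ((α i : ℝ) + 1) * bern n (k+1) (α + unitIdx n i) x
      = ((k:ℝ)+1) * (bern n k α x * (Fin.cons (1 - ∑ j, x j) x : Fin (n+1) → ℝ) i) := by
  have hF : (0:ℝ) < ∏ j, ((α j).factorial : ℝ) :=
    Finset.prod_pos (fun j _ => by positivity)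
  have hfact : ((k+1).factorial : ℝ) = ((k:ℝ)+1) * (k.factorial : ℝ) := by
    push_cast [Nat.factorial_succ]; ring
  induction i using Fin.cases with
  | zero =>
    have hP : ∏ j : Fin n, x j ^ (α + unitIdx n 0) j.succ = ∏ j : Fin n, x j ^ α j.succ := by
      apply Finset.prod_congr rfl
      intro j _
      have : (j.succ : Fin (n+1)) ≠ 0 := Fin.succ_ne_zero j
      simp [unitIdx, this]
    have h0 : (α + unitIdx n 0) 0 = α 0 + 1 := by simp [unitIdx]
    rw [bern, bern, prod_fact_add, hP, h0, hfact, Fin.cons_zero, pow_succ]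
    have : (α 0 : ℝ) + 1 ≠ 0 := by positivity
    field_simp
  | succ m =>
    have hP : ∏ j : Fin n, x j ^ (α + unitIdx n m.succ) j.succ
        = (∏ j : Fin n, x j ^ α j.succ) * x m := by
      rw [← Finset.mul_prod_erase univ (fun j => x j ^ (α + unitIdx n m.succ) j.succ) (mem_univ m),
          ← Finset.mul_prod_erase univ (fun j => x j ^ α j.succ) (mem_univ m)]
      have h1 : (α + unitIdx n m.succ) m.succ = α m.succ + 1 := by simp [unitIdx]
      have h2 : ∀ j ∈ univ.erase m, x j ^ (α + unitIdx n m.succ) j.succ = x j ^ α j.succ := by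
        intro j hj
        have hji : j ≠ m := (mem_erase.mp hj).1
        have : (j.succ : Fin (n+1)) ≠ m.succ := by
          simpa [Fin.succ_inj] using hji
        simp [unitIdx, this]
      rw [Finset.prod_congr rfl h2, h1, pow_succ]
      ring
    have h0 : (α + unitIdx n m.succ) 0 = α 0 := by
      have : (0 : Fin (n+1)) ≠ m.succ := (Fin.succ_ne_zero m).symm
      simp [unitIdx, this]
    rw [bern, bern, prod_fact_add, hP, h0, hfact, Fin.cons_succ]
    have : (α m.succ : ℝ) + 1 ≠ 0 := by positivity
    field_simp

lemma unit_le {n : ℕ} {β : Fin (n+1) → ℕ} {i : Fin (n+1)} (h : β i ≠ 0) :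
    ∀ j, unitIdx n i j ≤ β j := by
  intro j
  by_cases hj : j = i
  · subst hj; simp [unitIdx]; omega
  · simp [unitIdx, hj]

lemma reindex (n k : ℕ) (i : Fin (n+1)) (f : (Fin (n+1) → ℕ) → ℝ) :
    ∑ β ∈ multIdx n (k+1), (β i : ℝ) * f β
      = ∑ α ∈ multIdx n k, ((α i : ℝ) + 1) * f (α + unitIdx n i) := by
  rw [← Finset.sum_filter_of_ne (p := fun β => β i ≠ 0)
      (fun β _ h h0 => h (by simp [h0]))]
  refine Finset.sum_nbij' (fun β => β - unitIdx n i) (fun α => α + unitIdx n i)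
    ?_ ?_ ?_ ?_ ?_
  · intro β hβ
    obtain ⟨hβ1, hβ2⟩ := mem_filter.mp hβ
    rw [multIdx, Finset.Nat.mem_antidiagonalTuple] at hβ1 ⊢
    have hsub : ∑ j, (β - unitIdx n i) j = ∑ j, β j - ∑ j, unitIdx n i j := by
      have : ∀ j ∈ univ, unitIdx n i j ≤ β j := fun j _ => unit_le hβ2 j
      simpa using Finset.sum_tsub_distrib univ this
    have hunit : ∑ j, unitIdx n i j = 1 := by simp [unitIdx]
    rw [hsub, hβ1, hunit]
    omega
  · intro α hα
    rw [multIdx, Finset.Nat.mem_antidiagonalTuple] at hα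
    rw [mem_filter, multIdx, Finset.Nat.mem_antidiagonalTuple]
    constructor
    · have : ∑ j, (α + unitIdx n i) j = (∑ j, α j) + ∑ j, unitIdx n i j :=
        Finset.sum_add_distrib
      rw [this, hα]
      simp [unitIdx]
    · simp [unitIdx]
  · intro β hβ
    have hβ2 := (mem_filter.mp hβ).2
    funext j
    have := unit_le hβ2 j
    simp only [Pi.add_apply, Pi.sub_apply]
    omega
  · intro α _
    funext j
    simp only [Pi.add_apply, Pi.sub_apply]
    omega
  · intro β hβ
    have hβ2 := (mem_filter.mp hβ).2
    have hre : β - unitIdx n i + unitIdx n i = β := by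
      funext j
      have := unit_le hβ2 j
      simp only [Pi.add_apply, Pi.sub_apply]
      omega
    rw [hre]
    have : ((β - unitIdx n i) i : ℝ) + 1 = (β i : ℝ) := by
      have h1 : (1:ℕ) ≤ β i := Nat.one_le_iff_ne_zero.mpr hβ2
      simp only [Pi.sub_apply, unitIdx]
      push_cast [Nat.cast_sub h1]
      simp
    rw [this]

/-- degree elevation identity. -/
theorem stmt4 (n k : ℕ) (hn : 1 ≤ n)
    (p : (Fin n → ℝ) → ℝ) (b : (Fin (n+1) → ℕ) → ℝ)
    (hrep : ∀ x, p x = ∑ α ∈ multIdx n k, b α * bern n k α x)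
    (b' : (Fin (n+1) → ℕ) → ℝ)
    (hb' : ∀ β ∈ multIdx n (k+1),
      b' β = (1 / (k+1 : ℝ)) * ∑ i : Fin (n+1), (β i : ℝ) * b (β - unitIdx n i)) :
    ∀ x, p x = ∑ β ∈ multIdx n (k+1), b' β * bern n (k+1) β x := by
  intro x
  have hk : (k:ℝ) + 1 ≠ 0 := by positivity
  have hcons : ∑ i : Fin (n+1), (Fin.cons (1 - ∑ j, x j) x : Fin (n+1) → ℝ) i = 1 := by
    rw [Fin.sum_cons]; ring
  have key : ∀ α : Fin (n+1) → ℕ,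
      ∑ i : Fin (n+1), ((α i : ℝ) + 1) * (b α * bern n (k+1) (α + unitIdx n i) x)
        = ((k:ℝ)+1) * (b α * bern n k α x) := by
    intro α
    have h1 : ∀ i : Fin (n+1),
        ((α i : ℝ) + 1) * (b α * bern n (k+1) (α + unitIdx n i) x)
        = (b α * (((k:ℝ)+1) * bern n k α x)) *
            (Fin.cons (1 - ∑ j, x j) x : Fin (n+1) → ℝ) i := by
      intro i
      have := bern_elev n k α i x
      calc ((α i : ℝ) + 1) * (b α * bern n (k+1) (α + unitIdx n i) x)
          = b α * (((α i : ℝ) + 1) * bern n (k+1) (α + unitIdx n i) x) := by ring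
        _ = b α * (((k:ℝ)+1) * (bern n k α x *
              (Fin.cons (1 - ∑ j, x j) x : Fin (n+1) → ℝ) i)) := by rw [this]
        _ = (b α * (((k:ℝ)+1) * bern n k α x)) *
              (Fin.cons (1 - ∑ j, x j) x : Fin (n+1) → ℝ) i := by ring
    rw [Finset.sum_congr rfl (fun i _ => h1 i), ← Finset.mul_sum, hcons]
    ring
  rw [hrep]
  calc ∑ α ∈ multIdx n k, b α * bern n k α x
      = (1/((k:ℝ)+1)) * ∑ α ∈ multIdx n k, ∑ i : Fin (n+1),
          ((α i : ℝ)+1) * (b α * bern n (k+1) (α + unitIdx n i) x) := by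
        rw [Finset.sum_congr rfl (fun α _ => key α), Finset.mul_sum]
        apply Finset.sum_congr rfl; intro α _
        field_simp
    _ = (1/((k:ℝ)+1)) * ∑ i : Fin (n+1), ∑ α ∈ multIdx n k,
          ((α i : ℝ)+1) * (b α * bern n (k+1) (α + unitIdx n i) x) := by
        rw [Finset.sum_comm]
    _ = (1/((k:ℝ)+1)) * ∑ i : Fin (n+1), ∑ β ∈ multIdx n (k+1),
          (β i : ℝ) * (b (β - unitIdx n i) * bern n (k+1) β x) := by
        congr 1
        apply Finset.sum_congr rfl; intro i _
        rw [reindex n k i (fun β => b (β - unitIdx n i) * bern n (k+1) β x)]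
        apply Finset.sum_congr rfl; intro α _
        have hc : α + unitIdx n i - unitIdx n i = α := by
          funext j; simp
        rw [hc]
    _ = ∑ β ∈ multIdx n (k+1), b' β * bern n (k+1) β x := by
        rw [Finset.sum_comm, Finset.mul_sum]
        apply Finset.sum_congr rfl; intro β hβ
        have hsm : ∑ i : Fin (n+1), (β i:ℝ) * (b (β - unitIdx n i) * bern n (k+1) β x)
            = (∑ i : Fin (n+1), (β i:ℝ) * b (β - unitIdx n i)) * bern n (k+1) β x := by
          rw [Finset.sum_mul]
          exact Finset.sum_congr rfl (fun i _ => by ring)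
        rw [hsm, hb' β hβ]
        ring
end
end

section
/- (Monotonicity of the enclosure bound under degree elevation.) Let p be a polynomial in n variables with p(x) = Σ_{|α|=k} b_α B^{(k)}_α(x) for all x, and let b′_β = (1/(k+1)) Σ_{i=0}^{n} βᵢ b_{β−êᵢ} for |β| = k+1 be the degree-elevated coefficients. Then min_{|β|=k+1} b′_β ≥ min_{|α|=k} b_α and max_{|β|=k+1} b′_β ≤ max_{|α|=k} b_α; i.e., the degree-(k+1) enclosure interval B(p,k+1,Δ) is contained in the degree-k enclosure interval B(p,k,Δ). -/
open Finset

noncomputable section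

lemma sub_mem_multIdx (n k : ℕ) (β : Fin (n+1) → ℕ) (i : Fin (n+1))
    (hβ : β ∈ multIdx n (k+1)) (hi : 1 ≤ β i) : β - unitIdx n i ∈ multIdx n k := by
  simp only [multIdx, Finset.Nat.mem_antidiagonalTuple] at *
  have hle : ∀ j ∈ Finset.univ, unitIdx n i j ≤ β j := by
    intro j _
    by_cases h : j = i <;> simp [unitIdx, h]; omega
  have : ∑ j, (β - unitIdx n i) j = ∑ j, β j - ∑ j, unitIdx n i j := by
    simp only [Pi.sub_apply]
    exact Finset.sum_tsub_distrib _ hle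
  rw [this, hβ]
  simp [unitIdx]

lemma sum_coe (n k : ℕ) (β : Fin (n+1) → ℕ) (hβ : β ∈ multIdx n k) :
    ∑ i, (β i : ℝ) = (k : ℝ) := by
  simp only [multIdx, Finset.Nat.mem_antidiagonalTuple] at hβ
  rw [← Nat.cast_sum, hβ]

/-- monotonicity of the enclosure bound under degree elevation. -/
theorem stmt5 (n k : ℕ) (hn : 1 ≤ n)
    (p : (Fin n → ℝ) → ℝ) (b : (Fin (n+1) → ℕ) → ℝ)
    (hrep : ∀ x, p x = ∑ α ∈ multIdx n k, b α * bern n k α x)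
    (b' : (Fin (n+1) → ℕ) → ℝ)
    (hb' : ∀ β ∈ multIdx n (k+1),
      b' β = (1 / (k+1 : ℝ)) * ∑ i : Fin (n+1), (β i : ℝ) * b (β - unitIdx n i)) :
    (multIdx n k).inf' (multIdx_nonempty n k) b ≤
      (multIdx n (k+1)).inf' (multIdx_nonempty n (k+1)) b' ∧
    (multIdx n (k+1)).sup' (multIdx_nonempty n (k+1)) b' ≤
      (multIdx n k).sup' (multIdx_nonempty n k) b := by
  constructor
  · apply Finset.le_inf'
    intro β hβ
    rw [hb' β hβ]
    set m := (multIdx n k).inf' (multIdx_nonempty n k) b with hm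
    have hs : ∑ i, (β i : ℝ) = ((k:ℝ)+1) := by
      have := sum_coe n (k+1) β hβ; push_cast at this ⊢; linarith
    have h1 : m = (1/((k:ℝ)+1)) * ∑ i : Fin (n+1), (β i : ℝ) * m := by
      rw [← Finset.sum_mul, hs]; field_simp
    rw [h1]
    push_cast
    apply mul_le_mul_of_nonneg_left _ (by positivity)
    apply Finset.sum_le_sum
    intro i hi
    by_cases h : β i = 0
    · simp [h]
    · have : 1 ≤ β i := Nat.one_le_iff_ne_zero.mpr h
      have hmem := sub_mem_multIdx n k β i hβ this
      have : m ≤ b (β - unitIdx n i) := Finset.inf'_le _ hmem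
      have hpos : (0:ℝ) ≤ (β i : ℝ) := by positivity
      nlinarith
  · apply Finset.sup'_le
    intro β hβ
    rw [hb' β hβ]
    set m := (multIdx n k).sup' (multIdx_nonempty n k) b with hm
    have hs : ∑ i, (β i : ℝ) = ((k:ℝ)+1) := by
      have := sum_coe n (k+1) β hβ; push_cast at this ⊢; linarith
    have h1 : m = (1/((k:ℝ)+1)) * ∑ i : Fin (n+1), (β i : ℝ) * m := by
      rw [← Finset.sum_mul, hs]; field_simp
    rw [h1]
    push_cast
    apply mul_le_mul_of_nonneg_left _ (by positivity)
    apply Finset.sum_le_sum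
    intro i hi
    by_cases h : β i = 0
    · simp [h]
    · have : 1 ≤ β i := Nat.one_le_iff_ne_zero.mpr h
      have hmem := sub_mem_multIdx n k β i hβ this
      have : b (β - unitIdx n i) ≤ m := Finset.le_sup' _ hmem
      have hpos : (0:ℝ) ≤ (β i : ℝ) := by positivity
      nlinarith
end
end

section
/- (Range enclosing property for rational functions.) Let p and q be polynomials in n variables of degree ≤ k with Bernstein coefficients b_α(p,k,Δ) and b_α(q,k,Δ) of degree k on the standard simplex Δ, and assume b_α(q,k,Δ) > 0 for all |α| = k. Then q(x) > 0 for all x ∈ Δ, and for every x ∈ Δ: min_{|α|=k} b_α(p,k,Δ)/b_α(q,k,Δ) ≤ p(x)/q(x) ≤ max_{|α|=k} b_α(p,k,Δ)/b_α(q,k,Δ). -/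
open Finset

noncomputable section

lemma bern_nonneg' (n k : ℕ) (α : Fin (n+1) → ℕ) (x : Fin n → ℝ)
    (hx : x ∈ stdSimp n) : 0 ≤ bern n k α x := by
  obtain ⟨h1, h2⟩ := hx
  unfold bern
  apply mul_nonneg (mul_nonneg _ _)
  · exact pow_nonneg (by linarith) _
  · exact div_nonneg (by positivity) (Finset.prod_nonneg fun i _ => by positivity)
  · exact Finset.prod_nonneg fun i _ => pow_nonneg (h1 i) _

lemma vertIdx_mem (n k : ℕ) (j : Fin (n+1)) : vertIdx n k j ∈ multIdx n k := by
  simp [multIdx, Finset.Nat.mem_antidiagonalTuple, vertIdx]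

lemma bern_vertIdx_zero (n k : ℕ) (x : Fin n → ℝ) :
    bern n k (vertIdx n k 0) x = (1 - ∑ i, x i) ^ k := by
  unfold bern vertIdx
  have h1 : (∏ i, ((if i = (0 : Fin (n+1)) then k else 0).factorial : ℝ)) = k.factorial := by
    rw [Finset.prod_eq_single (0 : Fin (n+1))] <;> simp +contextual
  have h2 : (∏ i : Fin n, x i ^ (if i.succ = (0 : Fin (n+1)) then k else 0)) = 1 := by
    apply Finset.prod_eq_one; intro i _
    simp [Fin.succ_ne_zero]
  rw [h1, h2]
  simp [Nat.factorial_pos k, ne_of_gt (Nat.factorial_pos k)]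

lemma bern_vertIdx_succ (n k : ℕ) (m : Fin n) (x : Fin n → ℝ) :
    bern n k (vertIdx n k m.succ) x = x m ^ k := by
  unfold bern vertIdx
  have h1 : (∏ i, ((if i = m.succ then k else 0).factorial : ℝ)) = k.factorial := by
    rw [Finset.prod_eq_single m.succ] <;> simp +contextual
  have h2 : (∏ i : Fin n, x i ^ (if i.succ = m.succ then k else 0)) = x m ^ k := by
    rw [Finset.prod_eq_single m]
    · simp
    · intro i _ hi
      simp [Fin.succ_inj, hi]
    · simp
  rw [h1, h2, if_neg (Fin.succ_ne_zero m).symm]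
  rw [div_self (by exact_mod_cast (Nat.factorial_pos k).ne')]
  ring

/-- range enclosing property for rational functions. -/
theorem stmt6 (n k : ℕ) (hn : 1 ≤ n)
    (p q : (Fin n → ℝ) → ℝ) (b c : (Fin (n+1) → ℕ) → ℝ)
    (hrepp : ∀ x, p x = ∑ α ∈ multIdx n k, b α * bern n k α x)
    (hrepq : ∀ x, q x = ∑ α ∈ multIdx n k, c α * bern n k α x)
    (hc : ∀ α ∈ multIdx n k, 0 < c α) :
    (∀ x ∈ stdSimp n, 0 < q x) ∧
    ∀ x ∈ stdSimp n,
      (multIdx n k).inf' (multIdx_nonempty n k) (fun α => b α / c α) ≤ p x / q x ∧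
      p x / q x ≤ (multIdx n k).sup' (multIdx_nonempty n k) (fun α => b α / c α) := by
  have hqpos : ∀ x ∈ stdSimp n, 0 < q x := by
    intro x hx
    rw [hrepq x]
    apply Finset.sum_pos'
    · intro α hα
      exact mul_nonneg (hc α hα).le (bern_nonneg' n k α x hx)
    · obtain ⟨h1, h2⟩ := hx
      by_cases hs : ∑ i, x i < 1
      · refine ⟨vertIdx n k 0, vertIdx_mem n k 0, ?_⟩
        rw [bern_vertIdx_zero]
        have : 0 < 1 - ∑ i, x i := by linarith
        exact mul_pos (hc _ (vertIdx_mem n k 0)) (pow_pos this k)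
      · have hsum : ∑ i, x i = 1 := le_antisymm h2 (not_lt.mp hs)
        have : ∃ m : Fin n, 0 < x m := by
          by_contra hcon
          push_neg at hcon
          have : ∀ m : Fin n, x m = 0 := fun m => le_antisymm (hcon m) (h1 m)
          simp [this] at hsum
        obtain ⟨m, hm⟩ := this
        refine ⟨vertIdx n k m.succ, vertIdx_mem n k m.succ, ?_⟩
        rw [bern_vertIdx_succ]
        exact mul_pos (hc _ (vertIdx_mem n k m.succ)) (pow_pos hm k)
  refine ⟨hqpos, fun x hx => ?_⟩
  have hq := hqpos x hx
  set M := (multIdx n k).sup' (multIdx_nonempty n k) (fun α => b α / c α) with hM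
  set m := (multIdx n k).inf' (multIdx_nonempty n k) (fun α => b α / c α) with hm
  constructor
  · rw [le_div_iff₀ hq, hrepp x, hrepq x, Finset.mul_sum]
    apply Finset.sum_le_sum
    intro α hα
    have hcα := hc α hα
    have h1 : m ≤ b α / c α := hm ▸ Finset.inf'_le (fun α => b α / c α) hα
    have h2 : m * c α ≤ b α := (le_div_iff₀ hcα).mp h1
    have hb := bern_nonneg' n k α x hx
    calc m * (c α * bern n k α x) = (m * c α) * bern n k α x := by ring
      _ ≤ b α * bern n k α x := mul_le_mul_of_nonneg_right h2 hb
  · rw [div_le_iff₀ hq, hrepp x, hrepq x, Finset.mul_sum]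
    apply Finset.sum_le_sum
    intro α hα
    have hcα := hc α hα
    have h1 : b α / c α ≤ M := hM ▸ Finset.le_sup' (fun α => b α / c α) hα
    have h2 : b α ≤ M * c α := (div_le_iff₀ hcα).mp h1
    have hb := bern_nonneg' n k α x hx
    calc b α * bern n k α x ≤ (M * c α) * bern n k α x :=
        mul_le_mul_of_nonneg_right h2 hb
      _ = M * (c α * bern n k α x) := by ring
end
end

section
/- (Monotonicity of the rational enclosure bound under degree elevation.) Let (b_α)_{|α|=k} and (c_α)_{|α|=k} be real coefficients indexed by multi-indices α ∈ ℕ^{n+1} with |α| = k, with c_α > 0 for all α. Define the degree-elevated coefficients b′_β = (1/(k+1)) Σ_{i=0}^{n} βᵢ b_{β−êᵢ} and c′_β = (1/(k+1)) Σ_{i=0}^{n} βᵢ c_{β−êᵢ} for |β| = k+1. Then c′_β > 0 for all β, and min_{|β|=k+1} b′_β/c′_β ≥ min_{|α|=k} b_α/c_α and max_{|β|=k+1} b′_β/c′_β ≤ max_{|α|=k} b_α/c_α; i.e., the rational enclosure interval of degree k+1 is contained in that of degree k. -/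
open Finset

noncomputable section

lemma sub_unit_mem {n k : ℕ} {β : Fin (n+1) → ℕ} (hβ : β ∈ multIdx n (k+1))
    {i : Fin (n+1)} (hi : β i ≠ 0) : β - unitIdx n i ∈ multIdx n k := by
  simp only [multIdx, Finset.Nat.mem_antidiagonalTuple] at hβ ⊢
  rw [← Finset.add_sum_erase _ _ (Finset.mem_univ i)] at hβ ⊢
  have h2 : ∑ j ∈ Finset.univ.erase i, (β - unitIdx n i) j
      = ∑ j ∈ Finset.univ.erase i, β j := by
    refine Finset.sum_congr rfl fun j hj => ?_
    simp [unitIdx, Finset.ne_of_mem_erase hj]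
  have h3 : (β - unitIdx n i) i = β i - 1 := by simp [unitIdx]
  omega


/-- monotonicity of the rational enclosure bound under degree
elevation. -/
theorem stmt9 (n k : ℕ) (hn : 1 ≤ n)
    (b c : (Fin (n+1) → ℕ) → ℝ)
    (hc : ∀ α ∈ multIdx n k, 0 < c α)
    (b' c' : (Fin (n+1) → ℕ) → ℝ)
    (hb' : ∀ β ∈ multIdx n (k+1),
      b' β = (1 / (k+1 : ℝ)) * ∑ i : Fin (n+1), (β i : ℝ) * b (β - unitIdx n i))
    (hc' : ∀ β ∈ multIdx n (k+1),
      c' β = (1 / (k+1 : ℝ)) * ∑ i : Fin (n+1), (β i : ℝ) * c (β - unitIdx n i)) :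
    (∀ β ∈ multIdx n (k+1), 0 < c' β) ∧
    (multIdx n k).inf' (multIdx_nonempty n k) (fun α => b α / c α) ≤
      (multIdx n (k+1)).inf' (multIdx_nonempty n (k+1)) (fun β => b' β / c' β) ∧
    (multIdx n (k+1)).sup' (multIdx_nonempty n (k+1)) (fun β => b' β / c' β) ≤
      (multIdx n k).sup' (multIdx_nonempty n k) (fun α => b α / c α) := by
  have hkpos : (0:ℝ) < 1/(k+1:ℝ) := by positivity
  have hex : ∀ β ∈ multIdx n (k+1), ∃ i, β i ≠ 0 := by
    intro β hβ
    by_contra h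
    push_neg at h
    have hs : ∑ j, β j = k+1 := by
      simpa [multIdx, Finset.Nat.mem_antidiagonalTuple] using hβ
    simp [h] at hs
  have hc'pos : ∀ β ∈ multIdx n (k+1), 0 < c' β := by
    intro β hβ
    rw [hc' β hβ]
    apply mul_pos hkpos
    obtain ⟨i, hi⟩ := hex β hβ
    apply Finset.sum_pos'
    · intro j _
      rcases Nat.eq_zero_or_pos (β j) with h0 | hpos
      · simp [h0]
      · exact mul_nonneg (Nat.cast_nonneg _)
          (le_of_lt (hc _ (sub_unit_mem hβ hpos.ne')))
    · exact ⟨i, Finset.mem_univ i,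
        mul_pos (by exact_mod_cast Nat.pos_of_ne_zero hi) (hc _ (sub_unit_mem hβ hi))⟩
  refine ⟨hc'pos, ?_, ?_⟩
  · rw [Finset.le_inf'_iff]
    intro β hβ
    set m := (multIdx n k).inf' (multIdx_nonempty n k) (fun α => b α / c α) with hm
    rw [le_div_iff₀ (hc'pos β hβ), hb' β hβ, hc' β hβ]
    have key : m * ∑ i, (β i:ℝ) * c (β - unitIdx n i)
        ≤ ∑ i, (β i:ℝ) * b (β - unitIdx n i) := by
      rw [Finset.mul_sum]
      refine Finset.sum_le_sum fun j _ => ?_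
      rcases Nat.eq_zero_or_pos (β j) with h0 | hpos
      · simp [h0]
      · have hmem := sub_unit_mem hβ hpos.ne'
        have hcp := hc _ hmem
        have hle : m ≤ b (β - unitIdx n j) / c (β - unitIdx n j) :=
          Finset.inf'_le _ hmem
        have h2 := (le_div_iff₀ hcp).mp hle
        calc m * ((β j:ℝ) * c (β - unitIdx n j))
            = (β j:ℝ) * (m * c (β - unitIdx n j)) := by ring
          _ ≤ (β j:ℝ) * b (β - unitIdx n j) :=
            mul_le_mul_of_nonneg_left h2 (Nat.cast_nonneg _)
    calc m * ((1/(k+1:ℝ)) * ∑ i, (β i:ℝ) * c (β - unitIdx n i))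
        = (1/(k+1:ℝ)) * (m * ∑ i, (β i:ℝ) * c (β - unitIdx n i)) := by ring
      _ ≤ (1/(k+1:ℝ)) * ∑ i, (β i:ℝ) * b (β - unitIdx n i) :=
        mul_le_mul_of_nonneg_left key hkpos.le
  · rw [Finset.sup'_le_iff]
    intro β hβ
    set M := (multIdx n k).sup' (multIdx_nonempty n k) (fun α => b α / c α) with hM
    rw [div_le_iff₀ (hc'pos β hβ), hb' β hβ, hc' β hβ]
    have key : ∑ i, (β i:ℝ) * b (β - unitIdx n i)
        ≤ M * ∑ i, (β i:ℝ) * c (β - unitIdx n i) := by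
      rw [Finset.mul_sum]
      refine Finset.sum_le_sum fun j _ => ?_
      rcases Nat.eq_zero_or_pos (β j) with h0 | hpos
      · simp [h0]
      · have hmem := sub_unit_mem hβ hpos.ne'
        have hcp := hc _ hmem
        have hle : b (β - unitIdx n j) / c (β - unitIdx n j) ≤ M :=
          Finset.le_sup' (fun α => b α / c α) hmem
        have h2 := (div_le_iff₀ hcp).mp hle
        calc (β j:ℝ) * b (β - unitIdx n j)
            ≤ (β j:ℝ) * (M * c (β - unitIdx n j)) :=
            mul_le_mul_of_nonneg_left h2 (Nat.cast_nonneg _)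
          _ = M * ((β j:ℝ) * c (β - unitIdx n j)) := by ring
    calc (1/(k+1:ℝ)) * ∑ i, (β i:ℝ) * b (β - unitIdx n i)
        ≤ (1/(k+1:ℝ)) * (M * ∑ i, (β i:ℝ) * c (β - unitIdx n i)) :=
        mul_le_mul_of_nonneg_left key hkpos.le
      _ = M * ((1/(k+1:ℝ)) * ∑ i, (β i:ℝ) * c (β - unitIdx n i)) := by ring
end
end

section
/- (Existence of a positive Bernstein degree.) Let p and q be polynomials in n variables of degree l, with q(x) > 0 for all x ∈ Δ and b_α(q,k,Δ) > 0 for all k ≥ l and all |α| = k. Let f = p/q and suppose f(x) > 0 for all x ∈ Δ. Then there exists k ≥ l such that min_{|α|=k} b_α(f,k,Δ) > 0, i.e. all rational Bernstein coefficients of f of degree k on Δ are positive. -/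
open Finset

noncomputable section

/-! ### Auxiliary lemmas -/

lemma my_mem_multIdx {n k : ℕ} {α : Fin (n+1) → ℕ} :
    α ∈ multIdx n k ↔ ∑ j, α j = k := by
  rw [multIdx, Finset.Nat.mem_antidiagonalTuple]

lemma my_mem_le {n k : ℕ} {α : Fin (n+1) → ℕ} (h : α ∈ multIdx n k) (j : Fin (n+1)) :
    α j ≤ k := by
  rw [my_mem_multIdx] at h
  rw [← h]
  exact Finset.single_le_sum (fun i _ => Nat.zero_le _) (Finset.mem_univ j)

lemma my_antidiag_eq (m N : ℕ) :
    Finset.Nat.antidiagonalTuple m N = Finset.piAntidiag (univ : Finset (Fin m)) N := by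
  ext f
  simp [Finset.Nat.mem_antidiagonalTuple, Finset.mem_piAntidiag]

lemma my_multinomial {m N : ℕ} (y : Fin m → ℝ) :
    (∑ j, y j) ^ N =
      ∑ γ ∈ Finset.Nat.antidiagonalTuple m N,
        ((N.factorial : ℝ) / ∏ j, ((γ j).factorial : ℝ)) * ∏ j, y j ^ γ j := by
  rw [my_antidiag_eq, Finset.sum_pow_eq_sum_piAntidiag]
  refine Finset.sum_congr rfl fun f hf => ?_
  simp only [Finset.mem_piAntidiag] at hf
  congr 1
  have hspec := Nat.multinomial_spec (univ : Finset (Fin m)) f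
  rw [hf.1] at hspec
  have hprodpos : (0:ℝ) < ∏ j, ((f j).factorial : ℝ) := by positivity
  rw [eq_div_iff (ne_of_gt hprodpos), mul_comm]
  exact_mod_cast congrArg (fun t : ℕ => (t : ℝ)) hspec

lemma my_digits_inj {K : ℕ} : ∀ (m : ℕ) (f g : Fin m → ℕ), (∀ i, f i < K) → (∀ i, g i < K) →
    (∑ i, f i * K ^ (i : ℕ)) = (∑ i, g i * K ^ (i : ℕ)) → f = g
  | 0, f, g, _, _, _ => by ext i; exact i.elim0
  | (m+1), f, g, hf, hg, h => by
    rw [Fin.sum_univ_succ, Fin.sum_univ_succ] at h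
    simp only [Fin.val_succ, pow_succ', pow_zero, mul_one] at h
    have h' : f 0 + K * (∑ i : Fin m, f i.succ * K ^ (i:ℕ)) =
        g 0 + K * (∑ i : Fin m, g i.succ * K ^ (i:ℕ)) := by
      rw [Finset.mul_sum, Finset.mul_sum]
      simpa [mul_comm, mul_assoc, mul_left_comm] using h
    have h0 : f 0 = g 0 := by
      have := congrArg (· % K) h'
      simpa [Nat.add_mul_mod_self_left, Nat.mod_eq_of_lt (hf 0), Nat.mod_eq_of_lt (hg 0)] using this
    have hK : 0 < K := lt_of_le_of_lt (Nat.zero_le _) (hf 0)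
    have htail : (∑ i : Fin m, f i.succ * K ^ (i:ℕ)) = ∑ i : Fin m, g i.succ * K ^ (i:ℕ) := by
      rw [h0] at h'
      exact Nat.eq_of_mul_eq_mul_left hK (Nat.add_left_cancel h')
    have := my_digits_inj m (fun i => f i.succ) (fun i => g i.succ)
      (fun i => hf i.succ) (fun i => hg i.succ) htail
    ext i
    refine Fin.cases ?_ ?_ i
    · exact h0
    · intro j; exact congrFun this j

lemma my_vanish {n k : ℕ} (F : (Fin (n+1) → ℕ) → ℝ)
    (h : ∀ s : Fin (n+1) → ℝ, (∀ j, 0 < s j) →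
      ∑ α ∈ multIdx n k, F α * ∏ j, s j ^ α j = 0) :
    ∀ α ∈ multIdx n k, F α = 0 := by
  classical
  set e : (Fin (n+1) → ℕ) → ℕ := fun α => ∑ j, α j * (k+1) ^ (j : ℕ) with he
  set φ : Polynomial ℝ := ∑ α ∈ multIdx n k, Polynomial.C (F α) * Polynomial.X ^ (e α) with hφ
  have hroot : ∀ t : ℝ, 0 < t → φ.eval t = 0 := by
    intro t ht
    have hs : ∀ j : Fin (n+1), 0 < t ^ ((k+1) ^ (j:ℕ)) := fun j => pow_pos ht _
    have := h (fun j => t ^ ((k+1) ^ (j:ℕ))) hs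
    rw [hφ]
    simp only [Polynomial.eval_finset_sum, Polynomial.eval_mul, Polynomial.eval_C,
      Polynomial.eval_pow, Polynomial.eval_X]
    rw [← this]
    refine Finset.sum_congr rfl fun α _ => ?_
    congr 1
    rw [he]
    simp only [← pow_mul]
    rw [← Finset.prod_pow_eq_pow_sum]
    exact Finset.prod_congr rfl fun j _ => by rw [mul_comm]
  have hφ0 : φ = 0 := by
    apply Polynomial.eq_zero_of_infinite_isRoot
    refine Set.Infinite.mono ?_ (Set.Ioi_infinite (0:ℝ))
    intro t ht
    exact hroot t ht
  intro α₀ hα₀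
  have hco := congrArg (fun ψ : Polynomial ℝ => ψ.coeff (e α₀)) hφ0
  simp only [hφ, Polynomial.finset_sum_coeff, Polynomial.coeff_C_mul, Polynomial.coeff_X_pow,
    Polynomial.coeff_zero] at hco
  rw [Finset.sum_eq_single α₀] at hco
  · simpa using hco
  · intro α hα hne
    have : e α₀ ≠ e α := by
      intro heq
      apply hne
      refine (my_digits_inj (K := k+1) (n+1) α α₀ ?_ ?_ ?_)
      · intro i; exact Nat.lt_succ_of_le (my_mem_le hα i)
      · intro i; exact Nat.lt_succ_of_le (my_mem_le hα₀ i)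
      · simpa [he] using heq.symm
    simp [this]
  · intro habs; exact absurd hα₀ habs

lemma my_bern_subst {n k : ℕ} (α : Fin (n+1) → ℕ) (hα : α ∈ multIdx n k)
    (s : Fin (n+1) → ℝ) (hs : ∀ j, 0 < s j) :
    bern n k α (fun i => s i.succ / ∑ j, s j) =
      ((k.factorial : ℝ) / ∏ j, ((α j).factorial : ℝ)) * (∏ j, s j ^ α j) / (∑ j, s j) ^ k := by
  have hT : 0 < ∑ j, s j := Finset.sum_pos (fun j _ => hs j) univ_nonempty
  have hsum : ∑ i : Fin n, s i.succ = (∑ j, s j) - s 0 := by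
    rw [Fin.sum_univ_succ]; ring
  have h1 : (1 : ℝ) - ∑ i : Fin n, s i.succ / ∑ j, s j = s 0 / ∑ j, s j := by
    rw [← Finset.sum_div, hsum]
    field_simp
    ring
  rw [bern, h1]
  have h2 : (∏ i : Fin n, (s i.succ / ∑ j, s j) ^ α i.succ) * (s 0 / ∑ j, s j) ^ α 0
      = (∏ j, s j ^ α j) / (∑ j, s j) ^ k := by
    have : ∀ j : Fin (n+1), (s j / ∑ j', s j') ^ α j = s j ^ α j / (∑ j', s j') ^ α j :=
      fun j => div_pow _ _ _
    rw [mul_comm, ← Fin.prod_univ_succ (fun j => (s j / ∑ j', s j') ^ α j)]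
    simp only [this]
    rw [Finset.prod_div_distrib, Finset.prod_pow_eq_pow_sum]
    rw [my_mem_multIdx] at hα
    rw [hα]
  rw [mul_assoc, h2, mul_div_assoc]

lemma my_rep_subst {n k : ℕ} (p : MvPolynomial (Fin n) ℝ) (b : (Fin (n+1) → ℕ) → ℝ)
    (hrep : ∀ x, MvPolynomial.eval x p = ∑ α ∈ multIdx n k, b α * bern n k α x)
    (s : Fin (n+1) → ℝ) (hs : ∀ j, 0 < s j) :
    ∑ α ∈ multIdx n k,
        (b α * ((k.factorial:ℝ)/∏ j, ((α j).factorial:ℝ))) * ∏ j, s j ^ α j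
      = (∑ j, s j)^k * MvPolynomial.eval (fun i => s i.succ / ∑ j, s j) p := by
  have hT : 0 < ∑ j, s j := Finset.sum_pos (fun j _ => hs j) univ_nonempty
  have hTk : ((∑ j, s j)^k) ≠ 0 := pow_ne_zero _ (ne_of_gt hT)
  rw [hrep (fun i => s i.succ / ∑ j, s j), Finset.mul_sum]
  refine Finset.sum_congr rfl fun α hα => ?_
  rw [my_bern_subst α hα s hs]
  field_simp

/-- lift a multi-index on `Fin n` to `Fin (n+1)` with 0 in position 0 -/
def hat (n : ℕ) (β : Fin n →₀ ℕ) : Fin (n+1) → ℕ :=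
  fun j => Fin.cases 0 (fun i => β i) j

lemma hat_sum {n : ℕ} (β : Fin n →₀ ℕ) : ∑ j, hat n β j = ∑ i, β i := by
  rw [Fin.sum_univ_succ]
  simp [hat]

/-- explicit Bernstein-type coefficients of `p` of degree `k` (up to `∏ α! / k!`) -/
def gco {n : ℕ} (p : MvPolynomial (Fin n) ℝ) (k : ℕ)
    (α : Fin (n+1) → ℕ) : ℝ :=
  ∑ β ∈ p.support, MvPolynomial.coeff β p *
    (if ∀ j, hat n β j ≤ α j then
      (((k - ∑ i, β i).factorial : ℝ) / ∏ j, ((α j - hat n β j).factorial : ℝ))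
     else 0)

lemma my_shift {n k d : ℕ} (hd : d ≤ k) (h : Fin (n+1) → ℕ) (hh : ∑ j, h j = d)
    (s : Fin (n+1) → ℝ) :
    ∑ γ ∈ multIdx n (k - d),
        (((k-d).factorial:ℝ)/∏ j, ((γ j).factorial:ℝ)) * ∏ j, s j ^ (γ j + h j)
      = ∑ α ∈ multIdx n k,
        (if ∀ j, h j ≤ α j then
          (((k-d).factorial:ℝ)/∏ j, ((α j - h j).factorial:ℝ)) * ∏ j, s j ^ α j
         else 0) := by
  classical
  rw [← Finset.sum_filter]
  refine Finset.sum_nbij' (fun γ => γ + h) (fun α => α - h) ?_ ?_ ?_ ?_ ?_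
  · intro γ hγ
    rw [my_mem_multIdx] at hγ
    rw [Finset.mem_filter, my_mem_multIdx]
    constructor
    · simp only [Pi.add_apply]
      rw [Finset.sum_add_distrib, hγ, hh]
      omega
    · intro j; exact Nat.le_add_left _ _
  · intro α hα
    rw [Finset.mem_filter, my_mem_multIdx] at hα
    rw [my_mem_multIdx]
    have : ∑ j, ((α : Fin (n+1) → ℕ) - h) j + ∑ j, h j = ∑ j, α j := by
      rw [← Finset.sum_add_distrib]
      refine Finset.sum_congr rfl fun j _ => ?_
      have := hα.2 j
      simp only [Pi.sub_apply]
      omega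
    rw [hh, hα.1] at this
    simp only [Pi.sub_apply] at this ⊢
    omega
  · intro γ _; funext j; simp
  · intro α hα
    rw [Finset.mem_filter] at hα
    funext j
    simp only [Pi.sub_apply, Pi.add_apply]
    exact Nat.sub_add_cancel (hα.2 j)
  · intro γ _
    congr 1
    · congr 1
      refine Finset.prod_congr rfl fun j _ => ?_
      simp

lemma my_g_subst {n k : ℕ} (p : MvPolynomial (Fin n) ℝ)
    (hdeg : ∀ β ∈ p.support, (∑ i, β i) ≤ k)
    (s : Fin (n+1) → ℝ) (hs : ∀ j, 0 < s j) :
    (∑ j, s j)^k * MvPolynomial.eval (fun i => s i.succ / ∑ j, s j) p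
      = ∑ α ∈ multIdx n k, gco p k α * ∏ j, s j ^ α j := by
  classical
  have hT : 0 < ∑ j, s j := Finset.sum_pos (fun j _ => hs j) univ_nonempty
  rw [MvPolynomial.eval_eq']
  rw [Finset.mul_sum]
  have step1 : ∀ β ∈ p.support,
      (∑ j, s j)^k * (MvPolynomial.coeff β p * ∏ i, (s i.succ / ∑ j, s j) ^ β i)
      = MvPolynomial.coeff β p *
          ∑ α ∈ multIdx n k,
            (if ∀ j, hat n β j ≤ α j then
              (((k - ∑ i, β i).factorial : ℝ) / ∏ j, ((α j - hat n β j).factorial : ℝ)) *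
                ∏ j, s j ^ α j
             else 0) := by
    intro β hβ
    have hd := hdeg β hβ
    have hpow : ∏ i : Fin n, (s i.succ / ∑ j, s j) ^ β i
        = (∏ j, s j ^ hat n β j) / (∑ j, s j) ^ (∑ i, β i) := by
      have : ∏ j, s j ^ hat n β j = ∏ i : Fin n, s i.succ ^ β i := by
        rw [Fin.prod_univ_succ]; simp [hat]
      rw [this]
      simp only [div_pow]
      rw [Finset.prod_div_distrib, Finset.prod_pow_eq_pow_sum]
    rw [hpow]
    have hTk : (∑ j, s j)^k = (∑ j, s j) ^ (∑ i, β i) * (∑ j, s j) ^ (k - ∑ i, β i) := by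
      rw [← pow_add, Nat.add_sub_cancel' hd]
    rw [hTk]
    have hTne : (∑ j, s j) ^ (∑ i, β i) ≠ 0 := pow_ne_zero _ (ne_of_gt hT)
    rw [my_multinomial (N := k - ∑ i, β i) s, ← multIdx]
    rw [← my_shift hd (hat n β) (hat_sum β) s]
    rw [Finset.mul_sum, Finset.mul_sum, Finset.sum_mul]
    refine Finset.sum_congr rfl fun γ _ => ?_
    have : ∏ j, s j ^ (γ j + hat n β j) = (∏ j, s j ^ γ j) * ∏ j, s j ^ hat n β j := by
      rw [← Finset.prod_mul_distrib]
      exact Finset.prod_congr rfl fun j _ => pow_add _ _ _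
    rw [this]
    field_simp
  rw [Finset.sum_congr rfl step1]
  simp only [Finset.mul_sum]
  rw [Finset.sum_comm]
  refine Finset.sum_congr rfl fun α _ => ?_
  rw [gco, Finset.sum_mul]
  refine Finset.sum_congr rfl fun β _ => ?_
  rw [mul_assoc]
  congr 1
  split
  · rfl
  · simp


open Filter
lemma my_pow_sub_le (a b : ℝ) (hb : 0 ≤ b) (hba : b ≤ a) (ha : a ≤ 1) :
    ∀ m : ℕ, a ^ m - b ^ m ≤ m * (a - b)
  | 0 => by simp
  | (m+1) => by
    have hIH := my_pow_sub_le a b hb hba ha m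
    have h1 : a ^ (m+1) - b ^ (m+1) = a * (a ^ m - b ^ m) + b ^ m * (a - b) := by ring
    rw [h1]
    have ha0 : 0 ≤ a := le_trans hb hba
    have h2 : a * (a ^ m - b ^ m) ≤ a ^ m - b ^ m := by
      have hnn : 0 ≤ a ^ m - b ^ m := sub_nonneg.2 (pow_le_pow_left₀ hb hba m)
      nlinarith
    have h3 : b ^ m * (a - b) ≤ 1 * (a - b) := by
      have : b ^ m ≤ 1 := pow_le_one₀ hb (le_trans hba ha)
      nlinarith [sub_nonneg.2 hba]
    push_cast
    nlinarith

lemma my_prod_pow_sub {ι : Type*} (s : Finset ι) (u v : ι → ℝ) (m : ι → ℕ)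
    (h : ∀ i ∈ s, 0 ≤ v i ∧ v i ≤ u i ∧ u i ≤ 1) :
    (∏ i ∈ s, u i ^ m i) - ∏ i ∈ s, v i ^ m i ≤ ∑ i ∈ s, (m i : ℝ) * (u i - v i) := by
  classical
  induction s using Finset.cons_induction with
  | empty => simp
  | cons a s ha ih =>
    rw [Finset.prod_cons, Finset.prod_cons, Finset.sum_cons]
    have h' := fun i hi => h i (Finset.mem_cons_of_mem hi)
    have hq := h a (Finset.mem_cons_self a s)
    have hu1 : ∀ i ∈ s, u i ^ m i ≤ 1 := fun i hi =>
      pow_le_one₀ (le_trans (h' i hi).1 (h' i hi).2.1) (h' i hi).2.2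
    have hv0 : ∀ i ∈ s, 0 ≤ v i ^ m i := fun i hi => pow_nonneg (h' i hi).1 _
    have hu0 : ∀ i ∈ s, 0 ≤ u i ^ m i := fun i hi =>
      pow_nonneg (le_trans (h' i hi).1 (h' i hi).2.1) _
    have hPu1 : ∏ i ∈ s, u i ^ m i ≤ 1 := Finset.prod_le_one hu0 hu1
    have hPv0 : 0 ≤ ∏ i ∈ s, v i ^ m i := Finset.prod_nonneg hv0
    have hPv1 : ∏ i ∈ s, v i ^ m i ≤ 1 := Finset.prod_le_one hv0
      (fun i hi => le_trans (pow_le_pow_left₀ (h' i hi).1 (h' i hi).2.1 _) (hu1 i hi))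
    have hPmono : ∏ i ∈ s, v i ^ m i ≤ ∏ i ∈ s, u i ^ m i :=
      Finset.prod_le_prod hv0 (fun i hi => pow_le_pow_left₀ (h' i hi).1 (h' i hi).2.1 _)
    have hIH := ih h'
    have ha1 : u a ^ m a ≤ 1 := pow_le_one₀ (le_trans hq.1 hq.2.1) hq.2.2
    have ha0 : 0 ≤ u a ^ m a := pow_nonneg (le_trans hq.1 hq.2.1) _
    have hd : u a ^ m a - v a ^ m a ≤ (m a : ℝ) * (u a - v a) :=
      my_pow_sub_le (u a) (v a) hq.1 hq.2.1 hq.2.2 (m a)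
    have key : u a ^ m a * ∏ i ∈ s, u i ^ m i - v a ^ m a * ∏ i ∈ s, v i ^ m i
        = u a ^ m a * ((∏ i ∈ s, u i ^ m i) - ∏ i ∈ s, v i ^ m i)
          + (u a ^ m a - v a ^ m a) * ∏ i ∈ s, v i ^ m i := by ring
    rw [key]
    have t1 : u a ^ m a * ((∏ i ∈ s, u i ^ m i) - ∏ i ∈ s, v i ^ m i)
        ≤ (∏ i ∈ s, u i ^ m i) - ∏ i ∈ s, v i ^ m i := by
      nlinarith [sub_nonneg.2 hPmono]
    have t2 : (u a ^ m a - v a ^ m a) * ∏ i ∈ s, v i ^ m i ≤ (m a : ℝ) * (u a - v a) := by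
      have hnn : 0 ≤ u a ^ m a - v a ^ m a :=
        sub_nonneg.2 (pow_le_pow_left₀ hq.1 hq.2.1 _)
      nlinarith [mul_le_of_le_one_right hnn hPv1]
    linarith

lemma my_dF_pos {k d : ℕ} (hdk : d ≤ k) : 0 < k.descFactorial d := by
  have h2 := Nat.pow_sub_le_descFactorial k d
  have h1 : 0 < (k + 1 - d) ^ d := pow_pos (by omega) d
  exact lt_of_lt_of_le h1 h2

lemma my_R_est {n k : ℕ} (hk : 0 < k) (h : Fin (n+1) → ℕ) (d : ℕ) (hhd : ∑ j, h j = d)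
    (hdk : d ≤ k) (α : Fin (n+1) → ℕ) (hα : ∀ j, α j ≤ k) :
    |((∏ j, ((α j).descFactorial (h j) : ℝ)) / (k.descFactorial d : ℝ))
      - ∏ j, ((α j : ℝ)/k) ^ h j|
      ≤ ((((k:ℝ))/((k:ℝ)+1-d)) ^ d - 1) + d^2/(k:ℝ) := by
  set K : ℝ := (k : ℝ) with hK
  have hK0 : (0:ℝ) < K := by rw [hK]; exact_mod_cast hk
  have hK1d : (1:ℝ) ≤ K + 1 - d := by
    have : (d:ℝ) ≤ K := by rw [hK]; exact_mod_cast hdk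
    linarith
  have hK1d0 : (0:ℝ) < K + 1 - d := lt_of_lt_of_le one_pos hK1d
  have hcast : ((k + 1 - d : ℕ) : ℝ) = K + 1 - d := by
    have : d ≤ k + 1 := le_trans hdk (Nat.le_succ k)
    push_cast [Nat.cast_sub this]
    ring
  set R : ℝ := (∏ j, ((α j).descFactorial (h j) : ℝ)) / (k.descFactorial d : ℝ) with hR
  set T : ℝ := ∏ j, ((α j : ℝ)/k) ^ h j with hT
  have hdF_pos : (0:ℝ) < (k.descFactorial d : ℝ) := by exact_mod_cast my_dF_pos hdk
  have hnum_nonneg : (0:ℝ) ≤ ∏ j, ((α j).descFactorial (h j) : ℝ) :=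
    Finset.prod_nonneg fun j _ => by positivity
  have hu01 : ∀ j, 0 ≤ (α j : ℝ)/K ∧ (α j : ℝ)/K ≤ 1 := by
    intro j
    constructor
    · positivity
    · rw [div_le_one hK0, hK]; exact_mod_cast hα j
  have hT0 : 0 ≤ T := Finset.prod_nonneg fun j _ => pow_nonneg (hu01 j).1 _
  have hT1 : T ≤ 1 := Finset.prod_le_one (fun j _ => pow_nonneg (hu01 j).1 _)
    (fun j _ => pow_le_one₀ (hu01 j).1 (hu01 j).2)
  have hKd : K ^ d = ∏ j, K ^ h j := by
    rw [Finset.prod_pow_eq_pow_sum, hhd]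
  have hc1 : 1 ≤ (K/(K+1-d)) ^ d := by
    rcases Nat.eq_zero_or_pos d with hd0 | hd1
    · rw [hd0]; simp
    · apply one_le_pow₀
      rw [le_div_iff₀ hK1d0]
      have : (1:ℝ) ≤ d := by exact_mod_cast hd1
      linarith
  -- upper bound
  have hupper : R - T ≤ (K/(K+1-d)) ^ d - 1 := by
    have hnum : (∏ j, ((α j).descFactorial (h j) : ℝ)) ≤ ∏ j, (α j : ℝ) ^ h j := by
      refine Finset.prod_le_prod (fun j _ => by positivity) (fun j _ => ?_)
      exact_mod_cast Nat.descFactorial_le_pow (α j) (h j)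
    have hden : ((K + 1 - d)) ^ d ≤ (k.descFactorial d : ℝ) := by
      rw [← hcast]
      exact_mod_cast Nat.pow_sub_le_descFactorial k d
    have hRle : R ≤ (∏ j, (α j : ℝ) ^ h j) / (K + 1 - d) ^ d := by
      rw [hR]
      exact div_le_div₀ (Finset.prod_nonneg fun j _ => by positivity) hnum
        (pow_pos hK1d0 d) hden
    have hNT : (∏ j, (α j : ℝ) ^ h j) = T * K ^ d := by
      rw [hT, hKd, ← Finset.prod_mul_distrib]
      refine Finset.prod_congr rfl fun j _ => ?_
      rw [← mul_pow]
      congr 1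
      field_simp
      rw [hK]
    have hfac : (∏ j, (α j : ℝ) ^ h j) / (K + 1 - d) ^ d = T * (K/(K+1-d)) ^ d := by
      rw [hNT, div_pow, mul_div_assoc]
    rw [hfac] at hRle
    nlinarith
  -- lower bound
  have hlower : T - R ≤ d^2/K := by
    classical
    set u : Fin (n+1) → ℝ := fun j => (α j : ℝ)/K with hu
    set v : Fin (n+1) → ℝ := fun j => if h j = 0 then u j else ((α j + 1 - h j : ℕ):ℝ)/K with hv
    have huv : ∀ j ∈ (univ : Finset (Fin (n+1))), 0 ≤ v j ∧ v j ≤ u j ∧ u j ≤ 1 := by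
      intro j _
      refine ⟨?_, ?_, (hu01 j).2⟩
      · rw [hv]; dsimp only; split
        · exact (hu01 j).1
        · positivity
      · rw [hv, hu]; dsimp only; split
        · exact le_refl _
        · rename_i hj0
          have hle : (α j + 1 - h j : ℕ) ≤ α j := by omega
          exact div_le_div₀ (by positivity) (by exact_mod_cast hle) hK0 (le_refl K)
    have hvR : ∏ j, v j ^ h j ≤ R := by
      have hprod_eq : ∏ j, v j ^ h j = (∏ j, ((α j + 1 - h j : ℕ):ℝ) ^ h j) / K ^ d := by
        rw [hKd, ← Finset.prod_div_distrib]
        refine Finset.prod_congr rfl fun j _ => ?_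
        rw [hv]; dsimp only
        split
        · rename_i hj0; rw [hj0]; simp
        · rw [div_pow]
      rw [hprod_eq, hR]
      refine div_le_div₀ hnum_nonneg ?_ hdF_pos ?_
      · refine Finset.prod_le_prod (fun j _ => by positivity) (fun j _ => ?_)
        exact_mod_cast Nat.pow_sub_le_descFactorial (α j) (h j)
      · rw [hK]
        exact_mod_cast Nat.descFactorial_le_pow k d
    have hsum : T - ∏ j, v j ^ h j ≤ ∑ j, (h j : ℝ) * (u j - v j) :=
      my_prod_pow_sub univ u v h huv
    have hbound : ∑ j, (h j : ℝ) * (u j - v j) ≤ ∑ j, (h j : ℝ) * ((d:ℝ)/K) := by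
      refine Finset.sum_le_sum fun j _ => ?_
      rcases Nat.eq_zero_or_pos (h j) with hj0 | hjpos
      · simp [hj0]
      · have hjne : h j ≠ 0 := Nat.pos_iff_ne_zero.mp hjpos
        have hcge : (α j : ℝ) + 1 - h j ≤ ((α j + 1 - h j : ℕ):ℝ) := by
          rcases le_or_gt (h j) (α j + 1) with hle | hlt
          · rw [Nat.cast_sub hle]; push_cast; ring_nf; exact le_refl _
          · have hz : α j + 1 - h j = 0 := by omega
            rw [hz]
            have : ((α j : ℝ) + 1) < (h j : ℝ) := by exact_mod_cast hlt
            simp only [Nat.cast_zero]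
            linarith
        have hjd : h j ≤ d := by
          rw [← hhd]
          exact Finset.single_le_sum (fun i _ => Nat.zero_le _) (Finset.mem_univ j)
        have huv' : u j - v j ≤ (d:ℝ)/K := by
          rw [hu, hv]; dsimp only; rw [if_neg hjne]
          rw [div_sub_div_same, div_le_div_iff₀ hK0 hK0]
          have hjd' : (h j : ℝ) ≤ d := by exact_mod_cast hjd
          nlinarith
        exact mul_le_mul_of_nonneg_left huv' (by positivity)
    have hsum2 : ∑ j, (h j : ℝ) * ((d:ℝ)/K) = d^2/K := by
      rw [← Finset.sum_mul]
      have : ∑ j, (h j : ℝ) = d := by exact_mod_cast hhd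
      rw [this]
      ring
    linarith
  rw [abs_sub_le_iff]
  constructor
  · have : (0:ℝ) ≤ d^2/K := by positivity
    linarith
  · have : (0:ℝ) ≤ (K/(K+1-d)) ^ d - 1 := by linarith
    linarith

lemma my_eps_tendsto (d : ℕ) :
    Tendsto (fun k : ℕ => (((k:ℝ)/((k:ℝ)+1-d))^d - 1) + d^2/(k:ℝ)) atTop (nhds 0) := by
  have h1 : Tendsto (fun k : ℕ => (k:ℝ)/((k:ℝ)+1-d)) atTop (nhds 1) := by
    have := tendsto_natCast_div_add_atTop (𝕜 := ℝ) (1 - (d:ℝ))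
    refine this.congr fun k => ?_
    ring_nf
  have h2 : Tendsto (fun k : ℕ => ((k:ℝ)/((k:ℝ)+1-d))^d - 1) atTop (nhds 0) := by
    have := (h1.pow d).sub_const 1
    simpa using this
  have h3 : Tendsto (fun k : ℕ => (d:ℝ)^2/(k:ℝ)) atTop (nhds 0) :=
    tendsto_const_div_atTop_nhds_zero_nat _
  simpa using h2.add h3

lemma my_min (n : ℕ) (p : MvPolynomial (Fin n) ℝ)
    (hp : ∀ x ∈ stdSimp n, 0 < MvPolynomial.eval x p) :
    ∃ m : ℝ, 0 < m ∧ ∀ x ∈ stdSimp n, m ≤ MvPolynomial.eval x p := by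
  have hclosed : IsClosed (stdSimp n) := by
    have : stdSimp n = (⋂ i, {x : Fin n → ℝ | 0 ≤ x i}) ∩ {x : Fin n → ℝ | ∑ i, x i ≤ 1} := by
      ext x; simp [stdSimp, Set.mem_iInter]
    rw [this]
    exact IsClosed.inter (isClosed_iInter fun i =>
        isClosed_le continuous_const (continuous_apply i))
      (isClosed_le (by continuity) continuous_const)
  have hsub : stdSimp n ⊆ Set.Icc (0 : Fin n → ℝ) 1 := by
    intro x hx
    constructor
    · intro i; exact hx.1 i
    · intro i
      calc x i ≤ ∑ j, x j :=
            Finset.single_le_sum (fun j _ => hx.1 j) (Finset.mem_univ i)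
        _ ≤ 1 := hx.2
  have hcompact : IsCompact (stdSimp n) :=
    IsCompact.of_isClosed_subset isCompact_Icc hclosed hsub
  have hne : (stdSimp n).Nonempty := ⟨0, fun i => le_refl 0, by simp⟩
  obtain ⟨x₀, hx₀, hmin⟩ := hcompact.exists_isMinOn hne
    (MvPolynomial.continuous_eval (p := p)).continuousOn
  exact ⟨MvPolynomial.eval x₀ p, hp x₀ hx₀, fun x hx => hmin hx⟩

lemma my_b_formula {n k : ℕ} (p : MvPolynomial (Fin n) ℝ)
    (hdeg : ∀ β ∈ p.support, (∑ i, β i) ≤ k)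
    (b : (Fin (n+1) → ℕ) → ℝ)
    (hrep : ∀ x, MvPolynomial.eval x p = ∑ α ∈ multIdx n k, b α * bern n k α x) :
    ∀ α ∈ multIdx n k,
      b α = ∑ β ∈ p.support, MvPolynomial.coeff β p *
        ((∏ j, ((α j).descFactorial (hat n β j) : ℝ)) /
          (k.descFactorial (∑ i, β i) : ℝ)) := by
  classical
  have hvan : ∀ α ∈ multIdx n k,
      b α * ((k.factorial:ℝ)/∏ j, ((α j).factorial:ℝ)) - gco p k α = 0 := by
    apply my_vanish
    intro s hs
    simp only [sub_mul, Finset.sum_sub_distrib]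
    rw [my_rep_subst p b hrep s hs, my_g_subst p hdeg s hs, sub_self]
  intro α hα
  have hprodpos : (0:ℝ) < ∏ j, ((α j).factorial:ℝ) := by positivity
  have hkfpos : (0:ℝ) < (k.factorial:ℝ) := by positivity
  have h1 : b α * ((k.factorial:ℝ)/∏ j, ((α j).factorial:ℝ)) = gco p k α := by
    have := hvan α hα
    linarith
  have hker : ((k.factorial:ℝ)/∏ j, ((α j).factorial:ℝ)) *
      ((∏ j, ((α j).factorial:ℝ)) / (k.factorial:ℝ)) = 1 := by
    field_simp
  have h2 : b α = gco p k α * ((∏ j, ((α j).factorial:ℝ)) / (k.factorial:ℝ)) := by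
    calc b α = b α * (((k.factorial:ℝ)/∏ j, ((α j).factorial:ℝ)) *
          ((∏ j, ((α j).factorial:ℝ)) / (k.factorial:ℝ))) := by rw [hker, mul_one]
      _ = (b α * ((k.factorial:ℝ)/∏ j, ((α j).factorial:ℝ))) *
          ((∏ j, ((α j).factorial:ℝ)) / (k.factorial:ℝ)) := by ring
      _ = _ := by rw [h1]
  rw [h2, gco, Finset.sum_mul]
  refine Finset.sum_congr rfl fun β hβ => ?_
  rw [mul_assoc]
  congr 1
  have hd : (∑ i, β i) ≤ k := hdeg β hβ
  by_cases hle : ∀ j, hat n β j ≤ α j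
  · rw [if_pos hle]
    have e1 : (∏ j, ((α j).descFactorial (hat n β j):ℝ)) *
        ∏ j, (((α j - hat n β j).factorial):ℝ) = ∏ j, ((α j).factorial:ℝ) := by
      rw [← Finset.prod_mul_distrib]
      refine Finset.prod_congr rfl fun j _ => ?_
      have := Nat.factorial_mul_descFactorial (hle j)
      exact_mod_cast by rw [mul_comm] at this; exact_mod_cast congrArg (fun t : ℕ => (t:ℝ)) this
    have e2 : ((k.descFactorial (∑ i, β i):ℝ)) * (((k - ∑ i, β i).factorial):ℝ)
        = (k.factorial:ℝ) := by
      have := Nat.factorial_mul_descFactorial hd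
      rw [mul_comm] at this
      exact_mod_cast congrArg (fun t : ℕ => (t:ℝ)) this
    have hdfpos : (0:ℝ) < (k.descFactorial (∑ i, β i) : ℝ) := by
      exact_mod_cast my_dF_pos hd
    have hsubpos : (0:ℝ) < ∏ j, (((α j - hat n β j).factorial):ℝ) := by positivity
    rw [div_mul_div_comm, div_eq_div_iff (by positivity) (ne_of_gt hdfpos)]
    have key : ((k - ∑ i, β i).factorial:ℝ) * (∏ j, ((α j).factorial:ℝ)) *
          (k.descFactorial (∑ i, β i):ℝ)
        = (∏ j, ((α j).descFactorial (hat n β j):ℝ)) *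
          ((∏ j, (((α j - hat n β j).factorial):ℝ)) * (k.factorial:ℝ)) := by
      rw [← e1, ← e2]; ring
    linear_combination key
  · rw [if_neg hle, zero_mul]
    obtain ⟨j0, hj0⟩ := not_forall.mp hle
    have hz : ((α j0).descFactorial (hat n β j0) : ℝ) = 0 := by
      exact_mod_cast Nat.descFactorial_eq_zero_iff_lt.mpr (lt_of_not_ge hj0)
    rw [Finset.prod_eq_zero (Finset.mem_univ j0) hz, zero_div]

/-- existence of a positive Bernstein degree for a positive
rational function. -/
theorem stmt14 (n l : ℕ) (hn : 1 ≤ n)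
    (p q : MvPolynomial (Fin n) ℝ)
    (hdegp : p.totalDegree = l) (hdegq : q.totalDegree = l)
    (b c : (k : ℕ) → (Fin (n+1) → ℕ) → ℝ)
    (hrepp : ∀ k, l ≤ k →
      ∀ x, MvPolynomial.eval x p = ∑ α ∈ multIdx n k, b k α * bern n k α x)
    (hrepq : ∀ k, l ≤ k →
      ∀ x, MvPolynomial.eval x q = ∑ α ∈ multIdx n k, c k α * bern n k α x)
    (hqpos : ∀ x ∈ stdSimp n, 0 < MvPolynomial.eval x q)
    (hc : ∀ k, l ≤ k → ∀ α ∈ multIdx n k, 0 < c k α)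
    (hfpos : ∀ x ∈ stdSimp n, 0 < MvPolynomial.eval x p / MvPolynomial.eval x q) :
    ∃ k, l ≤ k ∧ ∀ α ∈ multIdx n k, 0 < b k α / c k α := by
  classical
  have hppos : ∀ x ∈ stdSimp n, 0 < MvPolynomial.eval x p := by
    intro x hx
    have h1 := hfpos x hx
    have h2 := hqpos x hx
    have h3 := mul_pos h1 h2
    rwa [div_mul_cancel₀ _ (ne_of_gt h2)] at h3
  obtain ⟨m, hm, hmle⟩ := my_min n p hppos
  have hdeg : ∀ β ∈ p.support, (∑ i, β i) ≤ l := by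
    intro β hβ
    have h1 := MvPolynomial.le_totalDegree hβ
    rw [hdegp] at h1
    have h2 : (β.sum fun _ e => e) = ∑ i, β i := by
      rw [Finsupp.sum_fintype]
      intro _; rfl
    rw [h2] at h1
    exact h1
  set E : ℕ → ℝ := fun k => ∑ β ∈ p.support, |MvPolynomial.coeff β p| *
    ((((k:ℝ)/((k:ℝ)+1-(∑ i, β i)))^(∑ i, β i) - 1) + (∑ i, β i)^2/(k:ℝ)) with hE
  have hEt : Filter.Tendsto E Filter.atTop (nhds 0) := by
    rw [hE]
    have ht := tendsto_finset_sum (f := fun (β : Fin n →₀ ℕ) (k : ℕ) =>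
        |MvPolynomial.coeff β p| *
          ((((k:ℝ)/((k:ℝ)+1-(∑ i, β i)))^(∑ i, β i) - 1) + (∑ i, β i)^2/(k:ℝ)))
      p.support (fun β _ => (my_eps_tendsto (∑ i, β i)).const_mul |MvPolynomial.coeff β p|)
    simpa using ht
  have hev : ∀ᶠ k in Filter.atTop, E k < m := hEt.eventually (gt_mem_nhds hm)
  obtain ⟨k, hk⟩ := ((Filter.eventually_ge_atTop l).and
    ((Filter.eventually_ge_atTop 1).and hev)).exists
  obtain ⟨hkl, hk1, hEk⟩ := hk
  refine ⟨k, hkl, fun α hα => ?_⟩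
  have hkpos : 0 < k := hk1
  have hkR : (0:ℝ) < (k:ℝ) := by exact_mod_cast hkpos
  have hb := my_b_formula p (fun β hβ => le_trans (hdeg β hβ) hkl) (b k) (hrepp k hkl) α hα
  set x₀ : Fin n → ℝ := fun i => (α i.succ : ℝ)/(k:ℝ) with hx₀
  have hx₀mem : x₀ ∈ stdSimp n := by
    constructor
    · intro i
      rw [hx₀]
      positivity
    · rw [hx₀]
      simp only
      rw [← Finset.sum_div, div_le_one hkR]
      have hs : ∑ j, α j = k := my_mem_multIdx.mp hα
      rw [Fin.sum_univ_succ] at hs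
      have : ∑ i : Fin n, α i.succ ≤ k := by omega
      exact_mod_cast this
  have heval : MvPolynomial.eval x₀ p = ∑ β ∈ p.support, MvPolynomial.coeff β p *
      ∏ j, ((α j : ℝ)/(k:ℝ)) ^ hat n β j := by
    rw [MvPolynomial.eval_eq']
    refine Finset.sum_congr rfl fun β _ => ?_
    congr 1
    have : ∏ j, ((α j : ℝ)/(k:ℝ)) ^ hat n β j = ∏ i : Fin n, x₀ i ^ β i := by
      rw [Fin.prod_univ_succ]
      simp [hat, hx₀]
    rw [this]
  have hest : |b k α - MvPolynomial.eval x₀ p| ≤ E k := by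
    rw [hb, heval, ← Finset.sum_sub_distrib, hE]
    refine le_trans (Finset.abs_sum_le_sum_abs _ _) ?_
    refine Finset.sum_le_sum fun β hβ => ?_
    rw [← mul_sub, abs_mul]
    refine mul_le_mul_of_nonneg_left ?_ (abs_nonneg _)
    exact my_R_est hkpos (hat n β) (∑ i, β i) (hat_sum β)
      (le_trans (hdeg β hβ) hkl) α (my_mem_le hα)
  have hmx := hmle x₀ hx₀mem
  have habs := (abs_le.mp hest).1
  have hbpos : 0 < b k α := by linarith
  exact div_pos hbpos (hc k hkl α hα)
end
end

section
/- (Powers–Reznick degree bound for certificates of positivity.) Let p be a polynomial in n variables of degree l ≥ 2 with Bernstein coefficients b_α(p,l,Δ) of degree l and b_α(p,k,Δ) of degree k on the standard simplex Δ. Suppose p(x) > 0 for all x ∈ Δ, and let p̲ = min_{x∈Δ} p(x). If k > ( l(l−1)/2 ) · ( max_{|α|=l} |b_α(p,l,Δ)| ) / p̲, then b_α(p,k,Δ) > 0 for all |α| = k. -/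
open Finset

noncomputable section

namespace PR16
variable {n : ℕ}

lemma mem_multIdx {k : ℕ} {β : Fin (n+1) → ℕ} : β ∈ multIdx n k ↔ ∑ i, β i = k := by
  simp [multIdx, Finset.Nat.mem_antidiagonalTuple]

/-- extended coordinates -/
def ext (x : Fin n → ℝ) : Fin (n+1) → ℝ := Fin.cons (1 - ∑ i, x i) x

lemma sum_ext (x : Fin n → ℝ) : ∑ i, ext x i = 1 := by
  rw [Fin.sum_univ_succ]; simp [ext]

lemma bern_eq (k : ℕ) (β : Fin (n+1) → ℕ) (x : Fin n → ℝ) :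
    bern n k β x = ((k.factorial : ℝ) / ∏ i, ((β i).factorial : ℝ)) * ∏ i, ext x i ^ β i := by
  rw [bern, show (∏ i, ext x i ^ β i) = ext x 0 ^ β 0 * ∏ i : Fin n, ext x i.succ ^ β i.succ
    from Fin.prod_univ_succ _]
  simp only [ext, Fin.cons_zero, Fin.cons_succ]
  ring

lemma multinom (m : ℕ) (y : Fin (n+1) → ℝ) :
    (∑ i, y i) ^ m
      = ∑ β ∈ multIdx n m, ((m.factorial : ℝ) / ∏ i, ((β i).factorial : ℝ)) * ∏ i, y i ^ β i := by
  rw [Finset.sum_pow_eq_sum_piAntidiag, multIdx, ← Finset.piAntidiag_univ_fin_eq_antidiagonalTuple]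
  refine Finset.sum_congr rfl fun β hβ => ?_
  have hs : ∑ i, β i = m := (Finset.mem_piAntidiag.1 hβ).1
  congr 1
  have hspec := Nat.multinomial_spec Finset.univ β
  rw [hs] at hspec
  have h0 : (∏ i, ((β i).factorial : ℝ)) ≠ 0 := by positivity
  rw [eq_div_iff h0, ← Nat.cast_prod, mul_comm, ← Nat.cast_mul, hspec]

def cEl (n l k : ℕ) (bl : (Fin (n+1) → ℕ) → ℝ) (β : Fin (n+1) → ℕ) : ℝ :=
  (∑ α ∈ multIdx n l, bl α * ∏ i, ((β i).choose (α i) : ℝ)) / (k.choose l : ℝ)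

lemma indep {k : ℕ} (d : (Fin (n+1) → ℕ) → ℝ)
    (h : ∀ x : Fin n → ℝ, ∑ β ∈ multIdx n k, d β * ∏ i, ext x i ^ β i = 0) :
    ∀ β ∈ multIdx n k, d β = 0 := by
  classical
  set g : (Fin (n+1) → ℝ) → ℝ := fun y => ∑ β ∈ multIdx n k, d β * ∏ i, y i ^ β i with hg
  -- g vanishes on the hyperplane sum = 1
  have h1 : ∀ y : Fin (n+1) → ℝ, (∑ i, y i) = 1 → g y = 0 := by
    intro y hy
    have hext : ext (fun i : Fin n => y i.succ) = y := by
      funext i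
      refine Fin.cases ?_ (fun j => ?_) i
      · have : ∑ i, y i = y 0 + ∑ i : Fin n, y i.succ := Fin.sum_univ_succ _
        simp only [ext, Fin.cons_zero]
        rw [this] at hy; linarith
      · simp [ext]
    have := h (fun i : Fin n => y i.succ)
    rwa [hext] at this
  -- homogeneity
  have hscale : ∀ (c : ℝ) (y : Fin (n+1) → ℝ), g (fun i => c * y i) = c ^ k * g y := by
    intro c y
    rw [hg, Finset.mul_sum]
    refine Finset.sum_congr rfl fun β hβ => ?_
    have hs : ∑ i, β i = k := mem_multIdx.1 hβ
    simp_rw [mul_pow]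
    rw [Finset.prod_mul_distrib, Finset.prod_pow_eq_pow_sum, hs]
    ring
  -- g vanishes where the coordinate sum is nonzero
  have h2 : ∀ y : Fin (n+1) → ℝ, (∑ i, y i) ≠ 0 → g y = 0 := by
    intro y hy
    have := hscale (∑ i, y i) (fun i => y i / (∑ i, y i))
    have hyy : (fun i => (∑ i, y i) * (y i / (∑ i, y i))) = y := by
      funext i; field_simp
    rw [hyy] at this
    rw [this, h1 _ ?_, mul_zero]
    rw [← Finset.sum_div, div_self hy]
  -- g is continuous
  have hc : Continuous g := by
    apply continuous_finset_sum
    intro β _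
    exact continuous_const.mul (continuous_finset_prod _ fun i _ => (continuous_apply i).pow _)
  -- g vanishes everywhere, by continuity
  have h3 : ∀ y : Fin (n+1) → ℝ, g y = 0 := by
    intro y
    by_cases hy : (∑ i, y i) = 0
    · have htt : Filter.Tendsto
          (fun m : ℕ => fun i => y i + (1 : ℝ) / (m + 1)) Filter.atTop (nhds y) := by
        rw [tendsto_pi_nhds]
        intro i
        have : Filter.Tendsto (fun m : ℕ => (1 : ℝ) / (m + 1)) Filter.atTop (nhds 0) :=
          tendsto_one_div_add_atTop_nhds_zero_nat
        simpa using this.const_add (y i)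
      have hgt : Filter.Tendsto (fun m : ℕ => g (fun i => y i + 1 / (m + 1)))
          Filter.atTop (nhds (g y)) := (hc.tendsto y).comp htt
      have hz : ∀ m : ℕ, g (fun i => y i + 1 / (m + 1)) = 0 := by
        intro m
        apply h2
        have : ∑ i : Fin (n+1), (y i + 1 / (m + 1 : ℝ)) = (n + 1 : ℝ) / (m + 1) := by
          rw [Finset.sum_add_distrib, hy, zero_add, Finset.sum_const, Finset.card_univ]
          simp [Fintype.card_fin]
          ring
        rw [this]
        positivity
      have heq : (fun m : ℕ => g (fun i => y i + 1 / (m + 1))) = fun _ => (0:ℝ) := funext hz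
      rw [heq] at hgt
      exact tendsto_nhds_unique hgt tendsto_const_nhds
    · exact h2 y hy
  -- now convert to a polynomial identity
  set F : MvPolynomial (Fin (n+1)) ℝ :=
    ∑ β ∈ multIdx n k, MvPolynomial.monomial (Finsupp.equivFunOnFinite.symm β) (d β) with hF
  have hev : ∀ y : Fin (n+1) → ℝ, MvPolynomial.eval y F = g y := by
    intro y
    rw [hF, map_sum]
    refine Finset.sum_congr rfl fun β hβ => ?_
    rw [MvPolynomial.eval_monomial]
    congr 1
    rw [Finsupp.prod]
    rw [Finset.prod_subset (Finset.subset_univ _)]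
    · rfl
    · intro i _ hi
      simp only [Finsupp.mem_support_iff, ne_eq, not_not] at hi
      rw [hi, pow_zero]
  have hF0 : F = 0 := by
    apply MvPolynomial.funext
    intro y
    rw [hev, h3, map_zero]
  intro β hβ
  have := congrArg (MvPolynomial.coeff (Finsupp.equivFunOnFinite.symm β)) hF0
  rw [hF] at this
  rw [MvPolynomial.coeff_zero] at this
  rw [MvPolynomial.coeff_sum] at this
  rw [Finset.sum_eq_single β] at this
  · rwa [MvPolynomial.coeff_monomial, if_pos rfl] at this
  · intro γ _ hγβ
    rw [MvPolynomial.coeff_monomial, if_neg]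
    intro hc
    exact hγβ (Finsupp.equivFunOnFinite.symm.injective hc)
  · intro hβ'; exact absurd hβ hβ'

lemma elevation {l k : ℕ} (hlk : l ≤ k) (bl : (Fin (n+1) → ℕ) → ℝ) (x : Fin n → ℝ) :
    ∑ α ∈ multIdx n l, bl α * bern n l α x
      = ∑ β ∈ multIdx n k, cEl n l k bl β * bern n k β x := by
  classical
  set f : ((Fin (n+1) → ℕ) × (Fin (n+1) → ℕ)) → ℝ := fun q =>
    bl q.2 * (∏ i, ((q.1 i).choose (q.2 i) : ℝ)) / (k.choose l : ℝ) * bern n k q.1 x with hf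
  have hRHS : ∑ β ∈ multIdx n k, cEl n l k bl β * bern n k β x
      = ∑ q ∈ (multIdx n k) ×ˢ (multIdx n l), f q := by
    rw [Finset.sum_product]
    refine Finset.sum_congr rfl fun β _ => ?_
    rw [cEl, Finset.sum_div, Finset.sum_mul]
  have hLHS : ∑ α ∈ multIdx n l, bl α * bern n l α x
      = ∑ q ∈ (multIdx n l) ×ˢ (multIdx n (k - l)), (fun q =>
          bl q.1 * ((l.factorial : ℝ) / ∏ i, ((q.1 i).factorial : ℝ))
            * (((k-l).factorial : ℝ) / ∏ i, ((q.2 i).factorial : ℝ))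
            * ∏ i, ext x i ^ (q.1 i + q.2 i)) q := by
    rw [Finset.sum_product]
    refine Finset.sum_congr rfl fun α _ => ?_
    have : bl α * bern n l α x = bl α * bern n l α x * (∑ i, ext x i) ^ (k - l) := by
      rw [sum_ext, one_pow, mul_one]
    rw [this, multinom, Finset.mul_sum]
    refine Finset.sum_congr rfl fun δ _ => ?_
    rw [bern_eq]
    simp_rw [pow_add, Finset.prod_mul_distrib]
    ring
  rw [hLHS, hRHS]
  -- throw away the zero terms on the RHS
  rw [show (multIdx n k) ×ˢ (multIdx n l)
      = ((multIdx n k) ×ˢ (multIdx n l)).filter (fun q => q.2 ≤ q.1) ∪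
        ((multIdx n k) ×ˢ (multIdx n l)).filter (fun q => ¬ q.2 ≤ q.1) from
    (Finset.filter_union_filter_not_eq _ _).symm]
  rw [Finset.sum_union (Finset.disjoint_filter_filter_not _ _ _)]
  have hzero : ∑ q ∈ ((multIdx n k) ×ˢ (multIdx n l)).filter (fun q => ¬ q.2 ≤ q.1), f q = 0 := by
    refine Finset.sum_eq_zero fun q hq => ?_
    rw [Finset.mem_filter] at hq
    obtain ⟨i, hi⟩ := not_forall.1 (fun hc => hq.2 (fun i => by exact hc i))
    push_neg at hi
    rw [hf]
    simp only
    rw [Finset.prod_eq_zero (Finset.mem_univ i)]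
    · ring
    · rw [Nat.choose_eq_zero_of_lt hi, Nat.cast_zero]
  rw [hzero, add_zero]
  -- now the bijection
  refine Finset.sum_nbij' (fun q => (q.1 + q.2, q.1)) (fun q => (q.2, q.1 - q.2)) ?_ ?_ ?_ ?_ ?_
  · intro q hq
    rw [Finset.mem_product] at hq
    rw [Finset.mem_filter, Finset.mem_product]
    have h1 : ∑ i, q.1 i = l := mem_multIdx.1 hq.1
    have h2 : ∑ i, q.2 i = k - l := mem_multIdx.1 hq.2
    refine ⟨⟨mem_multIdx.2 ?_, hq.1⟩, fun i => le_self_add⟩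
    rw [show (∑ i, (q.1 + q.2) i) = ∑ i, (q.1 i + q.2 i) from rfl, Finset.sum_add_distrib,
      h1, h2, Nat.add_sub_cancel' hlk]
  · intro q hq
    rw [Finset.mem_filter, Finset.mem_product] at hq
    rw [Finset.mem_product]
    have h1 : ∑ i, q.1 i = k := mem_multIdx.1 hq.1.1
    have h2 : ∑ i, q.2 i = l := mem_multIdx.1 hq.1.2
    refine ⟨hq.1.2, mem_multIdx.2 ?_⟩
    rw [show (∑ i, (q.1 - q.2) i) = ∑ i, (q.1 i - q.2 i) from rfl,
      Finset.sum_tsub_distrib Finset.univ (fun i _ => hq.2 i), h1, h2]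
  · intro q hq
    ext i <;> simp
  · intro q hq
    rw [Finset.mem_filter] at hq
    have := hq.2
    ext i
    · simp only
      exact (Nat.add_sub_cancel' (this i)).symm ▸ rfl
    · rfl
  · intro q hq
    rw [Finset.mem_product] at hq
    have h1 : ∑ i, q.1 i = l := mem_multIdx.1 hq.1
    have h2 : ∑ i, q.2 i = k - l := mem_multIdx.1 hq.2
    rw [hf]
    simp only
    rw [bern_eq]
    -- scalar identity
    have hP : ∀ i : Fin (n+1), ((q.1 i + q.2 i).choose (q.1 i) : ℝ)
        * (q.1 i).factorial * (q.2 i).factorial = ((q.1 i + q.2 i).factorial : ℝ) := by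
      intro i
      rw [← Nat.cast_mul, ← Nat.cast_mul, ← Nat.cast_inj (R := ℝ)] at *
      norm_cast
      have := Nat.choose_mul_factorial_mul_factorial (Nat.le_add_right (q.1 i) (q.2 i))
      simpa using this
    have hprodP : (∏ i, (((q.1 + q.2) i).choose (q.1 i) : ℝ))
        * (∏ i, ((q.1 i).factorial : ℝ)) * (∏ i, ((q.2 i).factorial : ℝ))
        = ∏ i, (((q.1 + q.2) i).factorial : ℝ) := by
      rw [← Finset.prod_mul_distrib, ← Finset.prod_mul_distrib]
      exact Finset.prod_congr rfl fun i _ => hP i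
    have hK : (k.choose l : ℝ) * l.factorial * (k - l).factorial = (k.factorial : ℝ) := by
      norm_cast
      exact Nat.choose_mul_factorial_mul_factorial hlk
    have c1 : (∏ i, ((q.1 i).factorial : ℝ)) ≠ 0 := by positivity
    have c2 : (∏ i, ((q.2 i).factorial : ℝ)) ≠ 0 := by positivity
    have c3 : (∏ i, (((q.1+q.2) i).factorial : ℝ)) ≠ 0 := by positivity
    have c4 : ((k.choose l : ℕ) : ℝ) ≠ 0 := by
      exact_mod_cast (Nat.choose_pos hlk).ne'
    have key : ((l.factorial : ℝ) / ∏ i, ((q.1 i).factorial : ℝ))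
        * (((k-l).factorial : ℝ) / ∏ i, ((q.2 i).factorial : ℝ))
        = (∏ i, (((q.1 + q.2) i).choose (q.1 i) : ℝ)) / (k.choose l : ℝ)
          * ((k.factorial : ℝ) / ∏ i, (((q.1+q.2) i).factorial : ℝ)) := by
      rw [div_mul_div_comm, div_mul_div_comm, div_eq_div_iff (by positivity) (by positivity)]
      linear_combination (∏ i, (((q.1+q.2) i).factorial : ℝ)) * hK
        - (k.factorial : ℝ) * hprodP
    simp only [Pi.add_apply] at key ⊢
    linear_combination (bl q.1 * ∏ i, ext x i ^ (q.1 i + q.2 i)) * key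

lemma prod_sub_prod_le {M : Type*} [DecidableEq M] (s : Finset M) (a b : M → ℝ)
    (ha : ∀ m ∈ s, 0 ≤ a m) (hab : ∀ m ∈ s, a m ≤ b m) :
    ∏ m ∈ s, b m - ∏ m ∈ s, a m
      ≤ ∑ m ∈ s, (b m - a m) * ∏ m' ∈ s.erase m, b m' := by
  classical
  induction s using Finset.induction_on with
  | empty => simp
  | @insert i s his IH =>
    have ha' : ∀ m ∈ s, 0 ≤ a m := fun m hm => ha m (Finset.mem_insert_of_mem hm)
    have hab' : ∀ m ∈ s, a m ≤ b m := fun m hm => hab m (Finset.mem_insert_of_mem hm)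
    have hb' : ∀ m ∈ s, 0 ≤ b m := fun m hm => le_trans (ha' m hm) (hab' m hm)
    have hai : 0 ≤ a i := ha i (Finset.mem_insert_self i s)
    have hbi : a i ≤ b i := hab i (Finset.mem_insert_self i s)
    have hA : (0:ℝ) ≤ ∏ m ∈ s, a m := Finset.prod_nonneg ha'
    have hB : (0:ℝ) ≤ ∏ m ∈ s, b m := Finset.prod_nonneg hb'
    have hAB : ∏ m ∈ s, a m ≤ ∏ m ∈ s, b m := Finset.prod_le_prod ha' hab'
    rw [Finset.prod_insert his, Finset.prod_insert his, Finset.sum_insert his,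
      Finset.erase_insert his]
    have hrest : ∀ m ∈ s, (b m - a m) * ∏ m' ∈ (insert i s).erase m, b m'
        = b i * ((b m - a m) * ∏ m' ∈ s.erase m, b m') := by
      intro m hm
      rw [Finset.erase_insert_of_ne (by rintro rfl; exact his hm) , Finset.prod_insert
        (fun hc => his (Finset.mem_of_mem_erase hc))]
      ring
    rw [Finset.sum_congr rfl hrest, ← Finset.mul_sum]
    have key : a i * (∏ m ∈ s, b m - ∏ m ∈ s, a m)
        ≤ b i * ∑ m ∈ s, (b m - a m) * ∏ m' ∈ s.erase m, b m' := by
      calc a i * (∏ m ∈ s, b m - ∏ m ∈ s, a m) ≤ b i * (∏ m ∈ s, b m - ∏ m ∈ s, a m) := by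
            apply mul_le_mul_of_nonneg_right hbi (by linarith)
        _ ≤ b i * ∑ m ∈ s, (b m - a m) * ∏ m' ∈ s.erase m, b m' := by
            apply mul_le_mul_of_nonneg_left (IH ha' hab') (le_trans hai hbi)
    nlinarith [hA, hB, hbi]

lemma sum_range_cast (m : ℕ) : ∑ j ∈ Finset.range m, (j : ℝ) = m * (m - 1) / 2 := by
  induction m with
  | zero => simp
  | succ m IH =>
    rw [Finset.sum_range_succ, IH]
    push_cast
    ring

def faff (n k : ℕ) (β α : Fin (n+1) → ℕ) : ℝ :=
  ∏ i, ∏ j ∈ Finset.range (α i), ((β i : ℝ)/k - (j : ℝ)/k)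

lemma cEl_eq {l k : ℕ} (hlk : l ≤ k) (hk0 : 0 < k) (bl : (Fin (n+1) → ℕ) → ℝ)
    (β : Fin (n+1) → ℕ) :
    cEl n l k bl β = ((k:ℝ)^l / ∏ j ∈ Finset.range l, ((k:ℝ) - j)) *
      ∑ α ∈ multIdx n l, bl α * ((l.factorial : ℝ) / ∏ i, ((α i).factorial : ℝ))
        * faff n k β α := by
  have hkR : (k:ℝ) ≠ 0 := Nat.cast_ne_zero.2 hk0.ne'
  have cast_desc : ∀ b a : ℕ, ((b.descFactorial a : ℕ) : ℝ) = ∏ j ∈ range a, ((b:ℝ) - j) := by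
    intro b a
    rcases le_or_gt a b with h | h
    · rw [Nat.descFactorial_eq_prod_range, Nat.cast_prod]
      refine Finset.prod_congr rfl fun j hj => ?_
      exact Nat.cast_sub (le_of_lt (lt_of_lt_of_le (Finset.mem_range.1 hj) h))
    · rw [Nat.descFactorial_eq_zero_iff_lt.2 h, Nat.cast_zero]
      rw [eq_comm, Finset.prod_eq_zero (Finset.mem_range.2 h)]
      rw [sub_self]
  have hC : ∀ b a : ℕ, (b.choose a : ℝ)
      = (∏ j ∈ range a, ((b:ℝ) - j)) / (a.factorial : ℝ) := by
    intro b a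
    rw [← cast_desc, Nat.descFactorial_eq_factorial_mul_choose, eq_div_iff
      (by exact_mod_cast a.factorial_pos.ne')]
    push_cast
    ring
  have hfaff : ∀ α ∈ multIdx n l,
      (∏ i, ∏ j ∈ range (α i), ((β i:ℝ) - j)) = (k:ℝ)^l * faff n k β α := by
    intro α hα
    rw [faff, ← mem_multIdx.1 hα, ← Finset.prod_pow_eq_pow_sum, ← Finset.prod_mul_distrib]
    refine Finset.prod_congr rfl fun i _ => ?_
    rw [show ((k:ℝ))^(α i) * ∏ j ∈ range (α i), ((β i : ℝ)/k - (j : ℝ)/k)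
      = ∏ j ∈ range (α i), ((k:ℝ) * ((β i : ℝ)/k - (j : ℝ)/k)) from by
        rw [Finset.prod_mul_distrib, Finset.prod_const, Finset.card_range]]
    refine Finset.prod_congr rfl fun j _ => ?_
    field_simp
  rw [cEl, Finset.sum_div, Finset.mul_sum]
  refine Finset.sum_congr rfl fun α hα => ?_
  have h1 : ∏ i, ((β i).choose (α i) : ℝ)
      = ((k:ℝ)^l * faff n k β α) / ∏ i, ((α i).factorial : ℝ) := by
    rw [show (∏ i, ((β i).choose (α i) : ℝ))
        = ∏ i, ((∏ j ∈ range (α i), ((β i:ℝ) - j)) / ((α i).factorial : ℝ)) from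
      Finset.prod_congr rfl fun i _ => hC (β i) (α i)]
    rw [Finset.prod_div_distrib, hfaff α hα]
  have h2 : (k.choose l : ℝ) = (∏ j ∈ range l, ((k:ℝ) - j)) / (l.factorial : ℝ) := hC k l
  rw [h1, h2]
  have d1 : (∏ i, ((α i).factorial : ℝ)) ≠ 0 := by positivity
  have d2 : (∏ j ∈ range l, ((k:ℝ) - j)) ≠ 0 := by
    refine Finset.prod_ne_zero_iff.2 fun j hj => ?_
    have : (j:ℝ) < k := by
      exact_mod_cast lt_of_lt_of_le (Finset.mem_range.1 hj) hlk
    linarith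
  have d3 : (l.factorial : ℝ) ≠ 0 := by exact_mod_cast l.factorial_pos.ne'
  field_simp

lemma estim {k : ℕ} (hk0 : 0 < k) (β α : Fin (n+1) → ℕ) :
    |(∏ i, ((β i:ℝ)/k) ^ α i) - faff n k β α|
      ≤ ∑ i, ((α i:ℝ) * ((α i:ℝ) - 1) / 2 / k) *
          (((β i:ℝ)/k) ^ (α i - 1) * ∏ i' ∈ Finset.univ.erase i, ((β i':ℝ)/k) ^ α i') := by
  classical
  have hkR : (0:ℝ) < k := by exact_mod_cast hk0
  set t : Fin (n+1) → ℝ := fun i => (β i : ℝ)/k with ht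
  have ht0 : ∀ i, 0 ≤ t i := fun i => by positivity
  set A : Fin (n+1) → ℝ := fun i => ∏ j ∈ Finset.range (α i), max (t i - j/k) 0 with hA
  set B : Fin (n+1) → ℝ := fun i => t i ^ α i with hB
  have hA0 : ∀ i, 0 ≤ A i := fun i => Finset.prod_nonneg fun j _ => le_max_right _ 0
  have hmaxle : ∀ i (j : ℕ), max (t i - j/k) 0 ≤ t i := by
    intro i j
    apply max_le _ (ht0 i)
    have : 0 ≤ (j:ℝ)/k := by positivity
    linarith
  have hAB : ∀ i, A i ≤ B i := by
    intro i
    have : B i = ∏ _j ∈ Finset.range (α i), t i := by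
      rw [Finset.prod_const, Finset.card_range]
    rw [this]
    exact Finset.prod_le_prod (fun j _ => le_max_right _ 0) (fun j _ => hmaxle i j)
  have hB0 : ∀ i, 0 ≤ B i := fun i => le_trans (hA0 i) (hAB i)
  have hfA : faff n k β α = ∏ i, A i := by
    rw [faff]
    refine Finset.prod_congr rfl fun i _ => ?_
    rw [hA]
    simp only
    rcases le_or_gt (α i) (β i) with h | h
    · refine Finset.prod_congr rfl fun j hj => ?_
      have hj' : (j:ℝ) ≤ (β i : ℝ) := by
        exact_mod_cast le_of_lt (lt_of_lt_of_le (Finset.mem_range.1 hj) h)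
      have h0 : (0:ℝ) ≤ t i - (j:ℝ)/k := by
        rw [ht]
        simp only [sub_nonneg]
        gcongr
      exact (max_eq_left h0).symm
    · have e1 : t i - ((β i : ℕ):ℝ)/k = 0 := by simp [ht]
      rw [Finset.prod_eq_zero (Finset.mem_range.2 h) e1,
        Finset.prod_eq_zero (Finset.mem_range.2 h) (by rw [e1, max_self])]
  have houter : ∏ i, B i - ∏ i, A i
      ≤ ∑ i, (B i - A i) * ∏ i' ∈ Finset.univ.erase i, B i' :=
    prod_sub_prod_le Finset.univ A B (fun i _ => hA0 i) (fun i _ => hAB i)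
  have hinner : ∀ i, B i - A i ≤ ((α i:ℝ) * ((α i:ℝ) - 1) / 2 / k) * t i ^ (α i - 1) := by
    intro i
    have h1 : ∏ _j ∈ Finset.range (α i), t i - A i
        ≤ ∑ j ∈ Finset.range (α i), (t i - max (t i - j/k) 0)
            * ∏ _j' ∈ (Finset.range (α i)).erase j, t i :=
      prod_sub_prod_le _ _ _ (fun j _ => le_max_right _ 0) (fun j _ => hmaxle i j)
    have h2 : ∀ j ∈ Finset.range (α i), (t i - max (t i - j/k) 0)
          * ∏ _j' ∈ (Finset.range (α i)).erase j, t i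
        ≤ ((j:ℝ)/k) * t i ^ (α i - 1) := by
      intro j hj
      rw [Finset.prod_const, Finset.card_erase_of_mem hj, Finset.card_range]
      apply mul_le_mul_of_nonneg_right _ (pow_nonneg (ht0 i) _)
      have : t i - (j:ℝ)/k ≤ max (t i - j/k) 0 := le_max_left _ _
      linarith
    have h3 : ∑ j ∈ Finset.range (α i), ((j:ℝ)/k) * t i ^ (α i - 1)
        = ((α i:ℝ) * ((α i:ℝ) - 1) / 2 / k) * t i ^ (α i - 1) := by
      rw [← Finset.sum_mul, ← Finset.sum_div, sum_range_cast]
    have h4 : B i = ∏ _j ∈ Finset.range (α i), t i := by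
      rw [Finset.prod_const, Finset.card_range]
    rw [h4]
    calc ∏ _j ∈ Finset.range (α i), t i - A i
        ≤ ∑ j ∈ Finset.range (α i), (t i - max (t i - j/k) 0)
            * ∏ _j' ∈ (Finset.range (α i)).erase j, t i := h1
      _ ≤ ∑ j ∈ Finset.range (α i), ((j:ℝ)/k) * t i ^ (α i - 1) :=
          Finset.sum_le_sum h2
      _ = _ := h3
  have habs : |(∏ i, t i ^ α i) - faff n k β α| = ∏ i, B i - ∏ i, A i := by
    rw [hfA, abs_of_nonneg]
    rw [sub_nonneg]
    exact Finset.prod_le_prod (fun i _ => hA0 i) (fun i _ => hAB i)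
  rw [habs]
  refine le_trans houter (Finset.sum_le_sum fun i _ => ?_)
  calc (B i - A i) * ∏ i' ∈ Finset.univ.erase i, B i'
      ≤ (((α i:ℝ) * ((α i:ℝ) - 1) / 2 / k) * t i ^ (α i - 1))
          * ∏ i' ∈ Finset.univ.erase i, B i' :=
        mul_le_mul_of_nonneg_right (hinner i) (Finset.prod_nonneg fun i' _ => hB0 i')
    _ = _ := by rw [mul_assoc]

lemma sumident {l : ℕ} (hl : 2 ≤ l) (t : Fin (n+1) → ℝ) (htsum : ∑ i, t i = 1)
    (i : Fin (n+1)) :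
    ∑ α ∈ multIdx n l, ((l.factorial : ℝ) / ∏ i', ((α i').factorial : ℝ))
        * ((α i:ℝ) * ((α i:ℝ) - 1))
        * (t i ^ (α i - 1) * ∏ i' ∈ Finset.univ.erase i, t i' ^ α i')
      = (l:ℝ) * ((l:ℝ) - 1) * t i := by
  classical
  obtain ⟨m, rfl⟩ : ∃ m, l = m + 2 := ⟨l - 2, by omega⟩
  set F : (Fin (n+1) → ℕ) → ℝ := fun α =>
    (((m+2).factorial : ℝ) / ∏ i', ((α i').factorial : ℝ)) * ((α i:ℝ) * ((α i:ℝ) - 1))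
      * (t i ^ (α i - 1) * ∏ i' ∈ Finset.univ.erase i, t i' ^ α i') with hF
  set two : Fin (n+1) → ℕ := fun j => if j = i then 2 else 0 with htwo
  have hsumtwo : ∑ j, two j = 2 := by
    rw [htwo]
    simp [Finset.sum_ite_eq']
  rw [← Finset.sum_filter_add_sum_filter_not (multIdx n (m+2)) (fun α => 2 ≤ α i)]
  have hvanish : ∑ α ∈ (multIdx n (m+2)).filter (fun α => ¬ 2 ≤ α i), F α = 0 := by
    refine Finset.sum_eq_zero fun α hα => ?_
    rw [Finset.mem_filter] at hα
    have : α i = 0 ∨ α i = 1 := by omega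
    rw [hF]
    rcases this with h | h <;> simp [h]
  rw [hvanish, add_zero]
  have hbij : ∑ α ∈ (multIdx n (m+2)).filter (fun α => 2 ≤ α i), F α
      = ∑ γ ∈ multIdx n m, ((m+2:ℝ) * (m+1:ℝ))
          * ((m.factorial : ℝ) / ∏ i', ((γ i').factorial : ℝ))
          * (t i * ∏ i', t i' ^ γ i') := by
    refine Finset.sum_nbij' (fun α => α - two) (fun γ => γ + two) ?_ ?_ ?_ ?_ ?_
    · intro α hα
      rw [Finset.mem_filter] at hα
      have h2 : ∀ j, two j ≤ α j := by
        intro j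
        rw [htwo]
        by_cases hj : j = i <;> simp [hj]
        exact hα.2
      rw [mem_multIdx, show (∑ j, (α - two) j) = ∑ j, (α j - two j) from rfl,
        Finset.sum_tsub_distrib Finset.univ (fun j _ => h2 j), mem_multIdx.1 hα.1, hsumtwo]
      omega
    · intro γ hγ
      rw [Finset.mem_filter, mem_multIdx]
      constructor
      · rw [show (∑ j, (γ + two) j) = ∑ j, (γ j + two j) from rfl, Finset.sum_add_distrib,
          mem_multIdx.1 hγ, hsumtwo]
      · show 2 ≤ γ i + two i
        rw [htwo]; simp
    · intro α hα
      rw [Finset.mem_filter] at hα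
      funext j
      show α j - two j + two j = α j
      apply Nat.sub_add_cancel
      rw [htwo]
      by_cases hj : j = i <;> simp [hj]
      exact hα.2
    · intro γ hγ
      funext j
      show γ j + two j - two j = γ j
      omega
    · intro α hα
      rw [Finset.mem_filter] at hα
      set γ := α - two with hγ
      have hαi : α i = γ i + 2 := by
        have hgi : γ i = α i - two i := rfl
        have htwoi : two i = 2 := by rw [htwo]; simp
        omega
      have hαj : ∀ j, j ≠ i → α j = γ j := by
        intro j hj
        show α j = α j - two j
        rw [htwo]; simp [hj]
      rw [hF]
      simp only
      -- rewrite the products over univ via mul_prod_erase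
      rw [← Finset.mul_prod_erase Finset.univ (fun i' => ((α i').factorial : ℝ))
        (Finset.mem_univ i)]
      rw [← Finset.mul_prod_erase Finset.univ (fun i' => t i' ^ γ i') (Finset.mem_univ i)]
      have he1 : ∏ i' ∈ Finset.univ.erase i, ((α i').factorial : ℝ)
          = ∏ i' ∈ Finset.univ.erase i, ((γ i').factorial : ℝ) :=
        Finset.prod_congr rfl fun j hj => by
          rw [hαj j (Finset.ne_of_mem_erase hj)]
      have he2 : ∏ i' ∈ Finset.univ.erase i, t i' ^ α i'
          = ∏ i' ∈ Finset.univ.erase i, t i' ^ γ i' :=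
        Finset.prod_congr rfl fun j hj => by
          rw [hαj j (Finset.ne_of_mem_erase hj)]
      rw [he1, he2, hαi]
      have hfac : (((γ i + 2).factorial : ℝ)) = ((γ i:ℝ)+2) * ((γ i:ℝ)+1) * ((γ i).factorial : ℝ) := by
        push_cast [Nat.factorial_succ]
        ring
      have hfac2 : (((m+2).factorial : ℝ)) = ((m:ℝ)+2) * ((m:ℝ)+1) * (m.factorial : ℝ) := by
        push_cast [Nat.factorial_succ]
        ring
      have d1 : ((γ i).factorial : ℝ) ≠ 0 := by exact_mod_cast (γ i).factorial_pos.ne'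
      have d2 : (∏ i' ∈ Finset.univ.erase i, ((γ i').factorial : ℝ)) ≠ 0 := by positivity
      rw [← Finset.mul_prod_erase Finset.univ (fun i' => ((γ i').factorial : ℝ))
        (Finset.mem_univ i)]
      rw [hfac, hfac2, show γ i + 2 - 1 = γ i + 1 from rfl, pow_succ]
      push_cast
      field_simp
      ring
  rw [hbij]
  have : ∑ γ ∈ multIdx n m, ((m+2:ℝ) * (m+1:ℝ))
          * ((m.factorial : ℝ) / ∏ i', ((γ i').factorial : ℝ))
          * (t i * ∏ i', t i' ^ γ i')
      = ((m+2:ℝ) * (m+1:ℝ)) * t i *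
        ∑ γ ∈ multIdx n m, ((m.factorial : ℝ) / ∏ i', ((γ i').factorial : ℝ))
          * ∏ i', t i' ^ γ i' := by
    rw [Finset.mul_sum]
    exact Finset.sum_congr rfl fun γ _ => by ring
  rw [this, ← multinom, htsum, one_pow, mul_one]
  push_cast
  ring

lemma isCompact_stdSimp : IsCompact (stdSimp n) := by
  have hsub : stdSimp n ⊆ Set.pi Set.univ (fun _ : Fin n => Set.Icc (0:ℝ) 1) := by
    intro x hx i _
    refine ⟨hx.1 i, ?_⟩
    calc x i ≤ ∑ j, x j := Finset.single_le_sum (fun j _ => hx.1 j) (Finset.mem_univ i)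
      _ ≤ 1 := hx.2
  have hclosed : IsClosed (stdSimp n) := by
    have heq : stdSimp n
        = (⋂ i, {x : Fin n → ℝ | 0 ≤ x i}) ∩ {x : Fin n → ℝ | ∑ i, x i ≤ 1} := by
      ext x
      simp [stdSimp, Set.mem_iInter, Set.mem_setOf_eq]
    rw [heq]
    exact IsClosed.inter
      (isClosed_iInter fun i => isClosed_le continuous_const (continuous_apply i))
      (isClosed_le (continuous_finset_sum _ fun i _ => continuous_apply i) continuous_const)
  exact (isCompact_univ_pi fun _ => isCompact_Icc).of_isClosed_subset hclosed hsub

lemma cEl_pos {l k : ℕ} (hl : 2 ≤ l) (hlk : l ≤ k) (hk0 : 0 < k)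
    (bl : (Fin (n+1) → ℕ) → ℝ) (pmin L : ℝ)
    (hpminpos : 0 < pmin) (hL : ∀ α ∈ multIdx n l, |bl α| ≤ L)
    (hp : ∀ x ∈ stdSimp n, pmin ≤ ∑ α ∈ multIdx n l, bl α * bern n l α x)
    (hkbig : L * ((l:ℝ) * ((l:ℝ)-1)) / (2*k) < pmin)
    (β : Fin (n+1) → ℕ) (hβ : β ∈ multIdx n k) :
    0 < cEl n l k bl β := by
  classical
  have hkR : (0:ℝ) < k := by exact_mod_cast hk0
  have hL0 : 0 ≤ L := by
    obtain ⟨α₀, hα₀⟩ := multIdx_nonempty n l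
    exact le_trans (abs_nonneg _) (hL α₀ hα₀)
  have htsum : ∑ i, (β i : ℝ)/k = 1 := by
    rw [← Finset.sum_div,
      show ∑ i, ((β i:ℕ):ℝ) = ((∑ i, β i : ℕ) : ℝ) from (Nat.cast_sum _ _).symm,
      mem_multIdx.1 hβ]
    exact div_self hkR.ne'
  have ht0 : ∀ i, (0:ℝ) ≤ (β i:ℝ)/k := fun i => by positivity
  set x : Fin n → ℝ := fun i => (β i.succ : ℝ)/k with hx
  have hsum' : (β 0 : ℝ)/k + ∑ i : Fin n, x i = 1 := by
    rw [hx, ← Fin.sum_univ_succ (fun i => (β i : ℝ)/k)]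
    exact htsum
  have hxmem : x ∈ stdSimp n := by
    refine ⟨fun i => ht0 _, ?_⟩
    have := ht0 0
    linarith [hsum']
  have hextx : ext x = fun i => (β i:ℝ)/k := by
    funext i
    refine Fin.cases ?_ (fun j => ?_) i
    · show 1 - ∑ i, x i = (β 0 : ℝ)/k
      linarith [hsum']
    · rfl
  set w : (Fin (n+1) → ℕ) → ℝ := fun α => (l.factorial:ℝ)/∏ i, ((α i).factorial:ℝ) with hw
  have hw0 : ∀ α, 0 ≤ w α := fun α => by rw [hw]; positivity
  have hpx : pmin ≤ ∑ α ∈ multIdx n l, bl α * w α * ∏ i, ((β i:ℝ)/k) ^ α i := by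
    refine le_trans (hp x hxmem) (le_of_eq (Finset.sum_congr rfl fun α _ => ?_))
    rw [bern_eq, hextx, hw, ← mul_assoc]
  have key2 : ∑ α ∈ multIdx n l, w α * ∑ i, ((α i:ℝ) * ((α i:ℝ) - 1) / 2 / k) *
          (((β i:ℝ)/k) ^ (α i - 1) * ∏ i' ∈ Finset.univ.erase i, ((β i':ℝ)/k) ^ α i')
      = (l:ℝ) * ((l:ℝ)-1) / (2*k) := by
    have hswap : ∑ α ∈ multIdx n l, w α * ∑ i, ((α i:ℝ) * ((α i:ℝ) - 1) / 2 / k) *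
            (((β i:ℝ)/k) ^ (α i - 1) * ∏ i' ∈ Finset.univ.erase i, ((β i':ℝ)/k) ^ α i')
        = ∑ i, ∑ α ∈ multIdx n l, w α * (((α i:ℝ) * ((α i:ℝ) - 1) / 2 / k) *
            (((β i:ℝ)/k) ^ (α i - 1) * ∏ i' ∈ Finset.univ.erase i, ((β i':ℝ)/k) ^ α i')) := by
      rw [Finset.sum_comm]
      exact Finset.sum_congr rfl fun α _ => Finset.mul_sum _ _ _
    rw [hswap]
    have hinner : ∀ i : Fin (n+1), ∑ α ∈ multIdx n l, w α * (((α i:ℝ) * ((α i:ℝ) - 1) / 2 / k) *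
            (((β i:ℝ)/k) ^ (α i - 1) * ∏ i' ∈ Finset.univ.erase i, ((β i':ℝ)/k) ^ α i'))
        = (1/(2*k)) * ((l:ℝ) * ((l:ℝ)-1) * ((β i:ℝ)/k)) := by
      intro i
      rw [← sumident hl (fun i => (β i:ℝ)/k) htsum i, Finset.mul_sum]
      refine Finset.sum_congr rfl fun α _ => ?_
      rw [hw]
      ring
    rw [Finset.sum_congr rfl fun i _ => hinner i, ← Finset.mul_sum, ← Finset.mul_sum, htsum]
    ring
  have key1 : ∀ α ∈ multIdx n l,
      |bl α * w α * ∏ i, ((β i:ℝ)/k) ^ α i - bl α * w α * faff n k β α|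
        ≤ L * (w α * ∑ i, ((α i:ℝ) * ((α i:ℝ) - 1) / 2 / k) *
            (((β i:ℝ)/k) ^ (α i - 1) * ∏ i' ∈ Finset.univ.erase i, ((β i':ℝ)/k) ^ α i')) := by
    intro α hα
    rw [show bl α * w α * ∏ i, ((β i:ℝ)/k) ^ α i - bl α * w α * faff n k β α
        = (bl α * w α) * ((∏ i, ((β i:ℝ)/k) ^ α i) - faff n k β α) from by ring, abs_mul]
    have h1 : |bl α * w α| ≤ L * w α := by
      rw [abs_mul, abs_of_nonneg (hw0 α)]
      exact mul_le_mul_of_nonneg_right (hL α hα) (hw0 α)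
    calc |bl α * w α| * |(∏ i, ((β i:ℝ)/k) ^ α i) - faff n k β α|
        ≤ (L * w α) * (∑ i, ((α i:ℝ) * ((α i:ℝ) - 1) / 2 / k) *
            (((β i:ℝ)/k) ^ (α i - 1) * ∏ i' ∈ Finset.univ.erase i, ((β i':ℝ)/k) ^ α i')) :=
          mul_le_mul h1 (estim hk0 β α) (abs_nonneg _) (mul_nonneg hL0 (hw0 α))
      _ = _ := by rw [mul_assoc]
  set S := ∑ α ∈ multIdx n l, bl α * w α * faff n k β α with hS
  have hSsplit : ∑ α ∈ multIdx n l, bl α * w α * ∏ i, ((β i:ℝ)/k) ^ α i - S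
      = ∑ α ∈ multIdx n l, (bl α * w α * ∏ i, ((β i:ℝ)/k) ^ α i
          - bl α * w α * faff n k β α) := by
    rw [hS, Finset.sum_sub_distrib]
  have habs : |∑ α ∈ multIdx n l, (bl α * w α * ∏ i, ((β i:ℝ)/k) ^ α i
        - bl α * w α * faff n k β α)| ≤ L * ((l:ℝ) * ((l:ℝ)-1) / (2*k)) := by
    calc |∑ α ∈ multIdx n l, (bl α * w α * ∏ i, ((β i:ℝ)/k) ^ α i
          - bl α * w α * faff n k β α)|
        ≤ ∑ α ∈ multIdx n l, |bl α * w α * ∏ i, ((β i:ℝ)/k) ^ α i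
            - bl α * w α * faff n k β α| := Finset.abs_sum_le_sum_abs _ _
      _ ≤ ∑ α ∈ multIdx n l, L * (w α * ∑ i, ((α i:ℝ) * ((α i:ℝ) - 1) / 2 / k) *
            (((β i:ℝ)/k) ^ (α i - 1) * ∏ i' ∈ Finset.univ.erase i, ((β i':ℝ)/k) ^ α i')) :=
          Finset.sum_le_sum key1
      _ = L * ((l:ℝ) * ((l:ℝ)-1) / (2*k)) := by rw [← Finset.mul_sum, key2]
  have hSge : pmin - L * ((l:ℝ) * ((l:ℝ)-1) / (2*k)) ≤ S := by
    have h2 := (abs_le.1 habs).2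
    rw [← hSsplit] at h2
    linarith [hpx]
  have hSpos : 0 < S := by
    have heq : L * ((l:ℝ) * ((l:ℝ)-1) / (2*k)) = L * ((l:ℝ) * ((l:ℝ)-1)) / (2*k) := by ring
    rw [heq] at hSge
    linarith [hkbig]
  rw [cEl_eq hlk hk0 bl β]
  have hfold : ∑ α ∈ multIdx n l, bl α * ((l.factorial : ℝ) / ∏ i, ((α i).factorial : ℝ))
        * faff n k β α = S :=
    Finset.sum_congr rfl fun α _ => by rw [hw]
  rw [hfold]
  apply mul_pos _ hSpos
  apply div_pos (pow_pos hkR l)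
  refine Finset.prod_pos fun j hj => ?_
  have : (j:ℝ) < (k:ℝ) := by
    exact_mod_cast lt_of_lt_of_le (Finset.mem_range.1 hj) hlk
  linarith

end PR16

/-- Powers–Reznick degree bound for certificates of positivity. -/
theorem stmt16 (n l k : ℕ) (hn : 1 ≤ n) (hl : 2 ≤ l)
    (p : MvPolynomial (Fin n) ℝ) (hdeg : p.totalDegree = l)
    (bl bk : (Fin (n+1) → ℕ) → ℝ)
    (hrepl : ∀ x, MvPolynomial.eval x p = ∑ α ∈ multIdx n l, bl α * bern n l α x)
    (hrepk : ∀ x, MvPolynomial.eval x p = ∑ α ∈ multIdx n k, bk α * bern n k α x)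
    (hppos : ∀ x ∈ stdSimp n, 0 < MvPolynomial.eval x p)
    (pmin : ℝ) (hpmin : pmin = sInf ((fun x => MvPolynomial.eval x p) '' stdSimp n))
    (hk : (k : ℝ) > ((l : ℝ) * ((l : ℝ) - 1) / 2) *
      ((multIdx n l).sup' (multIdx_nonempty n l) (fun α => |bl α|)) / pmin) :
    ∀ α ∈ multIdx n k, 0 < bk α := by
  classical
  intro β hβ
  set L := (multIdx n l).sup' (multIdx_nonempty n l) (fun α => |bl α|) with hLdef
  -- compactness and the minimum
  have hcomp : IsCompact (stdSimp n) := PR16.isCompact_stdSimp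
  have h0mem : (fun _ => (0:ℝ)) ∈ stdSimp n := ⟨fun i => le_refl 0, by simp⟩
  have hKcomp : IsCompact ((fun x => MvPolynomial.eval x p) '' stdSimp n) :=
    hcomp.image (MvPolynomial.continuous_eval p)
  have hKne : ((fun x => MvPolynomial.eval x p) '' stdSimp n).Nonempty :=
    ⟨_, Set.mem_image_of_mem _ h0mem⟩
  have hpminmem : pmin ∈ ((fun x => MvPolynomial.eval x p) '' stdSimp n) := by
    rw [hpmin]
    exact hKcomp.sInf_mem hKne
  obtain ⟨x₀, hx₀, hx₀e⟩ := hpminmem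
  have hpminpos : 0 < pmin := hx₀e ▸ hppos x₀ hx₀
  have hple : ∀ x ∈ stdSimp n, pmin ≤ MvPolynomial.eval x p := fun x hx =>
    hpmin ▸ csInf_le hKcomp.bddBelow (Set.mem_image_of_mem _ hx)
  -- pmin ≤ L
  set δ : Fin (n+1) → ℕ := fun i => if i = 0 then l else 0 with hδ
  have hδmem : δ ∈ multIdx n l := by
    rw [PR16.mem_multIdx, hδ]
    simp
  have hp0 : MvPolynomial.eval (fun _ => (0:ℝ)) p = bl δ := by
    rw [hrepl]
    rw [Finset.sum_eq_single δ]
    · rw [bern]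
      have e1 : ∏ i : Fin n, (0:ℝ) ^ δ i.succ = 1 := Finset.prod_eq_one fun i _ => by
        rw [hδ]
        simp [Fin.succ_ne_zero]
      have e2 : ∏ i, ((δ i).factorial : ℝ) = (l.factorial : ℝ) := by
        rw [Fin.prod_univ_succ, hδ]
        simp [Fin.succ_ne_zero]
      have e3 : δ 0 = l := by simp [hδ]
      rw [e1, e2, e3]
      have : ((l.factorial : ℝ)) ≠ 0 := by positivity
      simp [div_self this]
    · intro α hα hne
      have hex : ∃ i : Fin n, α i.succ ≠ 0 := by
        by_contra hc
        push_neg at hc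
        apply hne
        funext j
        refine Fin.cases ?_ (fun i => ?_) j
        · have hsum := PR16.mem_multIdx.1 hα
          rw [Fin.sum_univ_succ] at hsum
          simp only [hc, Finset.sum_const_zero, add_zero] at hsum
          rw [hδ]
          simp [hsum]
        · rw [hδ]
          simp [Fin.succ_ne_zero, hc i]
      obtain ⟨i, hi⟩ := hex
      rw [bern, Finset.prod_eq_zero (Finset.mem_univ i) (zero_pow hi)]
      ring
    · intro h
      exact absurd hδmem h
  have hblδL : |bl δ| ≤ L := Finset.le_sup' (fun α => |bl α|) hδmem
  have hpminL : pmin ≤ L :=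
    le_trans (hp0 ▸ hple _ h0mem) (le_trans (le_abs_self _) hblδL)
  have hL0 : (0:ℝ) ≤ L := le_trans (abs_nonneg _) hblδL
  -- degree bounds
  have hl2 : (2:ℝ) ≤ (l:ℝ) := by exact_mod_cast hl
  have hLpm : 1 ≤ L / pmin := (one_le_div hpminpos).2 hpminL
  have hquot : ((l:ℝ) * ((l:ℝ) - 1) / 2) * L / pmin
      = ((l:ℝ) * ((l:ℝ) - 1) / 2) * (L / pmin) := by ring
  have hll0 : (0:ℝ) ≤ (l:ℝ) * ((l:ℝ) - 1) / 2 := by nlinarith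
  have hkl1 : (l:ℝ) - 1 < (k:ℝ) := by
    have h1 : (l:ℝ) * ((l:ℝ) - 1) / 2 * 1 ≤ ((l:ℝ) * ((l:ℝ) - 1) / 2) * (L / pmin) :=
      mul_le_mul_of_nonneg_left hLpm hll0
    have h2 : (l:ℝ) - 1 ≤ (l:ℝ) * ((l:ℝ) - 1) / 2 := by nlinarith
    rw [hquot] at hk
    linarith
  have hlk : l ≤ k := by
    have h1 : (l:ℝ) < (k:ℝ) + 1 := by linarith
    have h2 : l < k + 1 := by exact_mod_cast h1
    omega
  have hk0 : 0 < k := by omega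
  have hkR : (0:ℝ) < (k:ℝ) := by exact_mod_cast hk0
  have hkbig : L * ((l:ℝ) * ((l:ℝ) - 1)) / (2*k) < pmin := by
    have h3 : ((l:ℝ)*((l:ℝ)-1)/2) * (L/pmin) < k := by
      rw [← hquot]
      exact hk
    have h4 : ((l:ℝ)*((l:ℝ)-1)/2) * (L/pmin) * pmin < (k:ℝ) * pmin :=
      mul_lt_mul_of_pos_right h3 hpminpos
    have h5 : ((l:ℝ)*((l:ℝ)-1)/2) * (L/pmin) * pmin = (l:ℝ)*((l:ℝ)-1)*L/2 := by
      field_simp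
    rw [h5] at h4
    rw [div_lt_iff₀ (by positivity : (0:ℝ) < 2*k)]
    linarith
  -- identify bk with the elevated coefficients
  have hbk : ∀ γ ∈ multIdx n k, bk γ = PR16.cEl n l k bl γ := by
    have hzero : ∀ x : Fin n → ℝ, ∑ γ ∈ multIdx n k,
        ((bk γ - PR16.cEl n l k bl γ) * ((k.factorial:ℝ)/∏ i, ((γ i).factorial:ℝ)))
          * ∏ i, PR16.ext x i ^ γ i = 0 := by
      intro x
      have e1 : ∑ γ ∈ multIdx n k, bk γ * bern n k γ x
          = ∑ γ ∈ multIdx n k, PR16.cEl n l k bl γ * bern n k γ x := by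
        rw [← hrepk x, hrepl x, PR16.elevation hlk bl x]
      have e2 : ∑ γ ∈ multIdx n k,
          ((bk γ - PR16.cEl n l k bl γ) * ((k.factorial:ℝ)/∏ i, ((γ i).factorial:ℝ)))
            * ∏ i, PR16.ext x i ^ γ i
          = ∑ γ ∈ multIdx n k, (bk γ * bern n k γ x
              - PR16.cEl n l k bl γ * bern n k γ x) := by
        refine Finset.sum_congr rfl fun γ _ => ?_
        rw [PR16.bern_eq]
        ring
      rw [e2, Finset.sum_sub_distrib, e1, sub_self]
    intro γ hγ
    have hz := PR16.indep _ hzero γ hγ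
    have hfac : ((k.factorial:ℝ)/∏ i, ((γ i).factorial:ℝ)) ≠ 0 := by positivity
    rcases mul_eq_zero.1 hz with h | h
    · linarith [sub_eq_zero.1 h]
    · exact absurd h hfac
  rw [hbk β hβ]
  refine PR16.cEl_pos hl hlk hk0 bl pmin L hpminpos
    (fun α hα => Finset.le_sup' (fun α => |bl α|) hα) ?_ hkbig β hβ
  intro x hx
  rw [← hrepl x]
  exact hple x hx
end
end
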